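/- arXiv:1705.10460 — 8 statements merged into one kernel-verified Lean document; each statement's English description precedes it below -/
import Mathlib

section
/- Let n ≥ 3 be an integer. Let x₁, x₂, ..., xₙ and α₁, α₂, ..., αₙ be positive real numbers with α₁ + α₂ + ... + αₙ = π. Then, with xₙ₊₁ = x₁, we have ∑_{i=1}^n xᵢ xᵢ₊₁ cos αᵢ ≤ cos(π/n) · ∑_{i=1}^n xᵢ². -/
open Real Finset

noncomputable def ee (n : ℕ) (m : ℤ) : ℂ :=
  Complex.exp ((((m : ℝ) * Real.pi / (n : ℝ) : ℝ) : ℂ) * Complex.I)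

lemma ee_add (n : ℕ) (a b : ℤ) : ee n (a + b) = ee n a * ee n b := by
  rw [ee, ee, ee, ← Complex.exp_add]
  congr 1
  push_cast
  ring

lemma ee_zero (n : ℕ) : ee n 0 = 1 := by simp [ee]

lemma ee_re (n : ℕ) (m : ℤ) : (ee n m).re = Real.cos ((m : ℝ) * Real.pi / n) := by
  rw [ee, Complex.exp_ofReal_mul_I_re]

lemma ee_conj (n : ℕ) (m : ℤ) : (starRingEnd ℂ) (ee n m) = ee n (-m) := by
  rw [ee, ← Complex.exp_conj]
  congr 1
  rw [map_mul, Complex.conj_ofReal, Complex.conj_I]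
  push_cast
  ring

lemma ee_pow (n : ℕ) (m : ℤ) (k : ℕ) : ee n m ^ k = ee n (m * k) := by
  induction k with
  | zero => simp [ee_zero]
  | succ k ih =>
      rw [pow_succ, ih, ← ee_add]
      congr 1
      push_cast
      ring

lemma ee_n (n : ℕ) (hn : 0 < n) : ee n n = -1 := by
  have h : ((n : ℤ) : ℝ) * Real.pi / n = Real.pi := by
    have : (n : ℝ) ≠ 0 := Nat.cast_ne_zero.mpr hn.ne'
    field_simp
    simp
  rw [ee, h, Complex.exp_pi_mul_I]

lemma ee_two_n_mul (n : ℕ) (hn : 0 < n) (s : ℤ) : ee n (2 * n * s) = 1 := by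
  have hne : (n : ℝ) ≠ 0 := Nat.cast_ne_zero.mpr hn.ne'
  have hr : (((2 * (n : ℤ) * s : ℤ) : ℝ) * Real.pi / n) = ((s : ℝ) * (2 * Real.pi)) := by
    push_cast
    field_simp
  rw [ee, hr]
  have h2 : ((((s : ℝ) * (2 * Real.pi)) : ℝ) : ℂ) * Complex.I
      = (s : ℂ) * (2 * (Real.pi : ℂ) * Complex.I) := by
    push_cast
    ring
  rw [h2]
  exact_mod_cast Complex.exp_int_mul_two_pi_mul_I s

lemma int_dvd_small (n d : ℤ) (h : n ∣ d) (h1 : -n < d) (h2 : d < n) : d = 0 := by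
  rcases h with ⟨s, rfl⟩
  rcases lt_trichotomy s 0 with hs | hs | hs
  · nlinarith
  · simp [hs]
  · nlinarith

lemma int_dvd_eq (n d : ℤ) (hn : 0 < n) (h : n ∣ d) (h1 : 0 < d) (h2 : d ≤ n) : d = n := by
  rcases h with ⟨s, rfl⟩
  have hs1 : 1 ≤ s := by nlinarith
  have hs2 : s ≤ 1 := by nlinarith
  have : s = 1 := le_antisymm hs2 hs1
  simp [this]

lemma ee_geom (n : ℕ) (hn : 0 < n) (c : ℤ) :
    ∑ j ∈ Finset.range n, ee n ((2 * (j : ℤ) + 1) * c)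
      = if (n : ℤ) ∣ c then (n : ℂ) * ee n c else 0 := by
  by_cases h : (n : ℤ) ∣ c
  · rw [if_pos h]
    obtain ⟨s, rfl⟩ := h
    have hterm : ∀ j ∈ Finset.range n, ee n ((2 * (j : ℤ) + 1) * ((n : ℤ) * s))
        = ee n ((n : ℤ) * s) := by
      intro j _
      have harg : (2 * (j : ℤ) + 1) * ((n : ℤ) * s) = (n : ℤ) * s + 2 * n * (s * j) := by ring
      rw [harg, ee_add, ee_two_n_mul n hn (s * j), mul_one]
    rw [Finset.sum_congr rfl hterm, Finset.sum_const, Finset.card_range, nsmul_eq_mul]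
  · rw [if_neg h]
    have hterm : ∀ j ∈ Finset.range n, ee n ((2 * (j : ℤ) + 1) * c)
        = ee n c * ee n (2 * c) ^ j := by
      intro j _
      rw [ee_pow, ← ee_add]
      congr 1
      ring
    rw [Finset.sum_congr rfl hterm, ← Finset.mul_sum]
    have hne : (n : ℝ) ≠ 0 := Nat.cast_ne_zero.mpr hn.ne'
    have hr1 : ee n (2 * c) ≠ 1 := by
      intro hr
      rw [ee] at hr
      obtain ⟨k, hk⟩ := Complex.exp_eq_one_iff.mp hr
      have hC : ((((2 * c : ℤ) : ℝ) * Real.pi / n : ℝ) : ℂ)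
          = (((k : ℝ) * (2 * Real.pi) : ℝ) : ℂ) := by
        apply mul_right_cancel₀ Complex.I_ne_zero
        rw [hk]
        push_cast
        ring
      have req : ((2 * c : ℤ) : ℝ) * Real.pi / n = (k : ℝ) * (2 * Real.pi) :=
        Complex.ofReal_inj.mp hC
      push_cast at req
      have hpi2 : (2 * Real.pi) ≠ 0 := by positivity
      have hmul : (2 * Real.pi) * (c : ℝ) = (2 * Real.pi) * ((k : ℝ) * n) := by
        field_simp at req
        linear_combination (2 * Real.pi) * req
      have hcr : (c : ℝ) = (k : ℝ) * n := mul_left_cancel₀ hpi2 hmul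
      have hc : c = k * n := by exact_mod_cast hcr
      exact h ⟨k, by rw [hc]; ring⟩
    rw [geom_sum_eq hr1, ee_pow]
    have hone : ee n (2 * c * n) = 1 := by
      have harg : (2 * c * (n : ℤ)) = 2 * n * c := by ring
      rw [harg, ee_two_n_mul n hn]
    rw [hone]
    simp

lemma master (n : ℕ) (hn : 0 < n) (v : ℕ → ℂ) (t : ℤ) :
    ∑ j ∈ range n, ee n ((2 * (j : ℤ) + 1) * t) *
        ((∑ k ∈ range n, v k * ee n (-(2 * (j : ℤ) + 1) * (k : ℤ))) *
          (starRingEnd ℂ) (∑ k ∈ range n, v k * ee n (-(2 * (j : ℤ) + 1) * (k : ℤ))))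
    = ∑ k ∈ range n, ∑ m ∈ range n,
        (v k * (starRingEnd ℂ) (v m)) *
          (if (n : ℤ) ∣ ((m : ℤ) - (k : ℤ) + t) then (n : ℂ) * ee n ((m : ℤ) - (k : ℤ) + t)
           else 0) := by
  have h1 : ∀ j ∈ range n,
      ee n ((2 * (j : ℤ) + 1) * t) *
        ((∑ k ∈ range n, v k * ee n (-(2 * (j : ℤ) + 1) * (k : ℤ))) *
          (starRingEnd ℂ) (∑ k ∈ range n, v k * ee n (-(2 * (j : ℤ) + 1) * (k : ℤ))))
      = ∑ k ∈ range n, ∑ m ∈ range n,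
          (v k * (starRingEnd ℂ) (v m)) * ee n ((2 * (j : ℤ) + 1) * ((m : ℤ) - (k : ℤ) + t)) := by
    intro j _
    rw [map_sum, Finset.sum_mul_sum, Finset.mul_sum]
    refine Finset.sum_congr rfl fun k _ => ?_
    rw [Finset.mul_sum]
    refine Finset.sum_congr rfl fun m _ => ?_
    rw [map_mul, ee_conj]
    have e1 : ee n ((2 * (j : ℤ) + 1) * ((m : ℤ) - (k : ℤ) + t))
        = ee n ((2 * (j : ℤ) + 1) * t) *
            (ee n (-(2 * (j : ℤ) + 1) * (k : ℤ)) * ee n (-(-(2 * (j : ℤ) + 1) * (m : ℤ)))) := by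
      rw [← ee_add, ← ee_add]
      congr 1
      ring
    rw [e1]
    ring
  rw [Finset.sum_congr rfl h1, Finset.sum_comm]
  refine Finset.sum_congr rfl fun k _ => ?_
  rw [Finset.sum_comm]
  refine Finset.sum_congr rfl fun m _ => ?_
  rw [← Finset.mul_sum, ee_geom n hn ((m : ℤ) - (k : ℤ) + t)]

lemma specA (n : ℕ) (hn : 0 < n) (v : ℕ → ℂ) :
    ∑ k ∈ range n, ∑ m ∈ range n,
        (v k * (starRingEnd ℂ) (v m)) *
          (if (n : ℤ) ∣ ((m : ℤ) - (k : ℤ) + 0) then (n : ℂ) * ee n ((m : ℤ) - (k : ℤ) + 0)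
           else 0)
    = (n : ℂ) * ∑ k ∈ range n, v k * (starRingEnd ℂ) (v k) := by
  rw [Finset.mul_sum]
  refine Finset.sum_congr rfl fun k hk => ?_
  have hk' : k < n := Finset.mem_range.mp hk
  have hstep : ∀ m ∈ range n,
      (v k * (starRingEnd ℂ) (v m)) *
        (if (n : ℤ) ∣ ((m : ℤ) - (k : ℤ) + 0) then (n : ℂ) * ee n ((m : ℤ) - (k : ℤ) + 0)
         else 0)
      = if m = k then (n : ℂ) * (v k * (starRingEnd ℂ) (v k)) else 0 := by
    intro m hm
    have hm' : m < n := Finset.mem_range.mp hm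
    by_cases h : m = k
    · subst h
      rw [if_pos rfl, if_pos (by simp)]
      have : ((m : ℤ) - (m : ℤ) + 0) = 0 := by ring
      rw [this, ee_zero, mul_one]
      ring
    · rw [if_neg h, if_neg, mul_zero]
      intro hdvd
      have hd0 : ((m : ℤ) - (k : ℤ) + 0) = 0 := by
        apply int_dvd_small (n : ℤ) _ hdvd
        · omega
        · omega
      have : m = k := by omega
      exact h this
  rw [Finset.sum_congr rfl hstep, Finset.sum_ite_eq' (range n) k
    (fun _ => (n : ℂ) * (v k * (starRingEnd ℂ) (v k))), if_pos hk]

lemma specB (p : ℕ) (v : ℕ → ℂ) :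
    ∑ k ∈ range (p + 1), ∑ m ∈ range (p + 1),
        (v k * (starRingEnd ℂ) (v m)) *
          (if ((p + 1 : ℕ) : ℤ) ∣ ((m : ℤ) - (k : ℤ) + 1)
           then ((p + 1 : ℕ) : ℂ) * ee (p + 1) ((m : ℤ) - (k : ℤ) + 1) else 0)
    = ((p + 1 : ℕ) : ℂ) *
        ((∑ k ∈ range p, v (k + 1) * (starRingEnd ℂ) (v k)) -
          v 0 * (starRingEnd ℂ) (v p)) := by
  have hn : 0 < p + 1 := Nat.succ_pos p
  rw [Finset.sum_range_succ']
  have hshift : ∀ k ∈ range p,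
      ∑ m ∈ range (p + 1),
        (v (k + 1) * (starRingEnd ℂ) (v m)) *
          (if ((p + 1 : ℕ) : ℤ) ∣ ((m : ℤ) - ((k + 1 : ℕ) : ℤ) + 1)
           then ((p + 1 : ℕ) : ℂ) * ee (p + 1) ((m : ℤ) - ((k + 1 : ℕ) : ℤ) + 1) else 0)
      = ((p + 1 : ℕ) : ℂ) * (v (k + 1) * (starRingEnd ℂ) (v k)) := by
    intro k hkp
    have hk' : k < p := Finset.mem_range.mp hkp
    have hstep : ∀ m ∈ range (p + 1),
        (v (k + 1) * (starRingEnd ℂ) (v m)) *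
          (if ((p + 1 : ℕ) : ℤ) ∣ ((m : ℤ) - ((k + 1 : ℕ) : ℤ) + 1)
           then ((p + 1 : ℕ) : ℂ) * ee (p + 1) ((m : ℤ) - ((k + 1 : ℕ) : ℤ) + 1) else 0)
        = if m = k then ((p + 1 : ℕ) : ℂ) * (v (k + 1) * (starRingEnd ℂ) (v k)) else 0 := by
      intro m hm
      have hm' : m < p + 1 := Finset.mem_range.mp hm
      by_cases h : m = k
      · subst h
        have harg : ((m : ℤ) - ((m + 1 : ℕ) : ℤ) + 1) = 0 := by push_cast; ring
        rw [if_pos rfl, harg, if_pos (dvd_zero _), ee_zero, mul_one]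
        ring
      · rw [if_neg h, if_neg, mul_zero]
        intro hdvd
        have hd0 : ((m : ℤ) - ((k + 1 : ℕ) : ℤ) + 1) = 0 := by
          apply int_dvd_small ((p + 1 : ℕ) : ℤ) _ hdvd
          · push_cast; omega
          · push_cast; omega
        have : m = k := by push_cast at hd0; omega
        exact h this
    rw [Finset.sum_congr rfl hstep, Finset.sum_ite_eq' (range (p + 1)) k
      (fun _ => ((p + 1 : ℕ) : ℂ) * (v (k + 1) * (starRingEnd ℂ) (v k))),
      if_pos (Finset.mem_range.mpr (by omega))]
  have hzero :
      ∑ m ∈ range (p + 1),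
        (v 0 * (starRingEnd ℂ) (v m)) *
          (if ((p + 1 : ℕ) : ℤ) ∣ ((m : ℤ) - ((0 : ℕ) : ℤ) + 1)
           then ((p + 1 : ℕ) : ℂ) * ee (p + 1) ((m : ℤ) - ((0 : ℕ) : ℤ) + 1) else 0)
      = -(((p + 1 : ℕ) : ℂ) * (v 0 * (starRingEnd ℂ) (v p))) := by
    have hstep : ∀ m ∈ range (p + 1),
        (v 0 * (starRingEnd ℂ) (v m)) *
          (if ((p + 1 : ℕ) : ℤ) ∣ ((m : ℤ) - ((0 : ℕ) : ℤ) + 1)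
           then ((p + 1 : ℕ) : ℂ) * ee (p + 1) ((m : ℤ) - ((0 : ℕ) : ℤ) + 1) else 0)
        = if m = p then -(((p + 1 : ℕ) : ℂ) * (v 0 * (starRingEnd ℂ) (v p))) else 0 := by
      intro m hm
      have hm' : m < p + 1 := Finset.mem_range.mp hm
      by_cases h : m = p
      · subst h
        rw [if_pos rfl, if_pos (by push_cast; exact ⟨1, by ring⟩)]
        have harg : ((m : ℤ) - ((0 : ℕ) : ℤ) + 1) = ((m + 1 : ℕ) : ℤ) := by push_cast; ring
        rw [harg, ee_n (m + 1) (Nat.succ_pos m)]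
        ring
      · rw [if_neg h, if_neg, mul_zero]
        intro hdvd
        have hpos : (0 : ℤ) < ((m : ℤ) - ((0 : ℕ) : ℤ) + 1) := by push_cast; omega
        have hle : ((m : ℤ) - ((0 : ℕ) : ℤ) + 1) ≤ ((p + 1 : ℕ) : ℤ) := by push_cast; omega
        have heq := int_dvd_eq ((p + 1 : ℕ) : ℤ) _ (by positivity) hdvd hpos hle
        have : m = p := by push_cast at heq; omega
        exact h this
    rw [Finset.sum_congr rfl hstep, Finset.sum_ite_eq' (range (p + 1)) p
      (fun _ => -(((p + 1 : ℕ) : ℂ) * (v 0 * (starRingEnd ℂ) (v p)))),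
      if_pos (Finset.mem_range.mpr (by omega))]
  rw [Finset.sum_congr rfl hshift, hzero, ← Finset.mul_sum]
  ring

lemma lemA (n : ℕ) (hn : 0 < n) (v : ℕ → ℂ) :
    ∑ j ∈ range n, Complex.normSq (∑ k ∈ range n, v k * ee n (-(2 * (j : ℤ) + 1) * (k : ℤ)))
      = (n : ℝ) * ∑ k ∈ range n, Complex.normSq (v k) := by
  have h := master n hn v 0
  rw [specA n hn v] at h
  have h2 : ∑ j ∈ range n, ee n ((2 * (j : ℤ) + 1) * 0) *
      ((∑ k ∈ range n, v k * ee n (-(2 * (j : ℤ) + 1) * (k : ℤ))) *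
        (starRingEnd ℂ) (∑ k ∈ range n, v k * ee n (-(2 * (j : ℤ) + 1) * (k : ℤ))))
      = ∑ j ∈ range n,
          ((Complex.normSq (∑ k ∈ range n, v k * ee n (-(2 * (j : ℤ) + 1) * (k : ℤ))) : ℝ) : ℂ) :=
    Finset.sum_congr rfl fun j _ => by
      rw [mul_zero, ee_zero, one_mul, Complex.mul_conj]
  rw [h2] at h
  have h3 : ∑ k ∈ range n, v k * (starRingEnd ℂ) (v k)
      = ∑ k ∈ range n, ((Complex.normSq (v k) : ℝ) : ℂ) :=
    Finset.sum_congr rfl fun k _ => Complex.mul_conj _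
  rw [h3] at h
  exact_mod_cast h

lemma lemB (p : ℕ) (v : ℕ → ℂ) :
    ∑ j ∈ range (p + 1),
        Real.cos ((2 * (j : ℝ) + 1) * Real.pi / ((p : ℝ) + 1)) *
          Complex.normSq (∑ k ∈ range (p + 1), v k * ee (p + 1) (-(2 * (j : ℤ) + 1) * (k : ℤ)))
      = ((p : ℝ) + 1) *
          ((∑ k ∈ range p, (v (k + 1) * (starRingEnd ℂ) (v k)).re) -
            (v 0 * (starRingEnd ℂ) (v p)).re) := by
  have h := master (p + 1) (Nat.succ_pos p) v 1
  rw [specB p v] at h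
  have h2 : ∑ j ∈ range (p + 1), ee (p + 1) ((2 * (j : ℤ) + 1) * 1) *
      ((∑ k ∈ range (p + 1), v k * ee (p + 1) (-(2 * (j : ℤ) + 1) * (k : ℤ))) *
        (starRingEnd ℂ) (∑ k ∈ range (p + 1), v k * ee (p + 1) (-(2 * (j : ℤ) + 1) * (k : ℤ))))
      = ∑ j ∈ range (p + 1), ee (p + 1) (2 * (j : ℤ) + 1) *
          ((Complex.normSq (∑ k ∈ range (p + 1), v k * ee (p + 1) (-(2 * (j : ℤ) + 1) * (k : ℤ))) : ℝ) : ℂ) :=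
    Finset.sum_congr rfl fun j _ => by rw [mul_one, Complex.mul_conj]
  rw [h2] at h
  have h3 := congrArg Complex.re h
  simp only [Complex.re_sum, Complex.mul_re, Complex.ofReal_re, Complex.ofReal_im, mul_zero,
    sub_zero, Complex.natCast_re, Complex.natCast_im, Complex.sub_re, zero_mul, ee_re] at h3
  push_cast at h3 ⊢
  convert h3 using 2
  simp only [Complex.mul_re]

lemma cos_bound (n : ℕ) (hn : 0 < n) (j : ℕ) (hj : j < n) :
    Real.cos ((2 * (j : ℝ) + 1) * Real.pi / n) ≤ Real.cos (Real.pi / n) := by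
  have hnR : (0 : ℝ) < n := by exact_mod_cast hn
  have hπ := Real.pi_pos
  have h0 : 0 < Real.pi / n := by positivity
  have hjn : (j : ℝ) + 1 ≤ n := by exact_mod_cast hj
  have hj0 : (0 : ℝ) ≤ (j : ℝ) := Nat.cast_nonneg j
  have h1 : Real.pi / n ≤ (2 * (j : ℝ) + 1) * Real.pi / n := by
    rw [mul_div_assoc]
    nlinarith
  have h2 : (2 * (j : ℝ) + 1) * Real.pi / n ≤ 2 * Real.pi - Real.pi / n := by
    have e : (2 * (n : ℝ) - 1) * Real.pi / n = 2 * Real.pi - Real.pi / n := by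
      field_simp
    rw [← e]
    gcongr
    nlinarith
  by_cases hTπ : (2 * (j : ℝ) + 1) * Real.pi / n ≤ Real.pi
  · exact Real.cos_le_cos_of_nonneg_of_le_pi h0.le hTπ h1
  · push_neg at hTπ
    have hcos : Real.cos ((2 * (j : ℝ) + 1) * Real.pi / n)
        = Real.cos (2 * Real.pi - (2 * (j : ℝ) + 1) * Real.pi / n) := by
      rw [Real.cos_sub]
      simp
    rw [hcos]
    apply Real.cos_le_cos_of_nonneg_of_le_pi h0.le (by linarith) (by linarith)

lemma pair_re (a b s t : ℝ) :
    (((a : ℂ) * Complex.exp ((s : ℂ) * Complex.I)) *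
      (starRingEnd ℂ) ((b : ℂ) * Complex.exp ((t : ℂ) * Complex.I))).re
    = a * b * Real.cos (s - t) := by
  rw [map_mul, ← Complex.exp_conj, Complex.conj_ofReal]
  have hc : (starRingEnd ℂ) ((t : ℂ) * Complex.I) = ((-t : ℝ) : ℂ) * Complex.I := by
    rw [map_mul, Complex.conj_ofReal, Complex.conj_I]
    push_cast
    ring
  rw [hc]
  have hprod : ((a : ℂ) * Complex.exp ((s : ℂ) * Complex.I)) *
      ((b : ℂ) * Complex.exp (((-t : ℝ) : ℂ) * Complex.I))
      = ((a * b : ℝ) : ℂ) * Complex.exp (((s - t : ℝ) : ℂ) * Complex.I) := by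
    rw [mul_mul_mul_comm, ← Complex.exp_add]
    push_cast
    ring_nf
  rw [hprod]
  rw [Complex.re_ofReal_mul, Complex.exp_ofReal_mul_I_re]

lemma normSq_aux (a s : ℝ) :
    Complex.normSq ((a : ℂ) * Complex.exp ((s : ℂ) * Complex.I)) = a ^ 2 := by
  rw [Complex.normSq_mul, Complex.normSq_ofReal]
  have h1 : Complex.normSq (Complex.exp ((s : ℂ) * Complex.I)) = 1 := by
    rw [← Complex.sq_norm, Complex.norm_exp_ofReal_mul_I]
    norm_num
  rw [h1]
  ring

/-- **Tóth's inequality.** For `n ≥ 3`, positive reals `x₁,…,xₙ` and positive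
`α₁,…,αₙ` with `∑ αᵢ = π`, and indices taken cyclically (`xₙ₊₁ = x₁`),
`∑ xᵢ xᵢ₊₁ cos αᵢ ≤ cos (π/n) · ∑ xᵢ²`. -/
theorem toth_inequality (n : ℕ) (hn : 3 ≤ n) (x α : ℕ → ℝ)
    (hx : ∀ i ∈ Finset.range n, 0 < x i)
    (hα : ∀ i ∈ Finset.range n, 0 < α i)
    (hsum : ∑ i ∈ Finset.range n, α i = Real.pi) :
    ∑ i ∈ Finset.range n, x i * x ((i + 1) % n) * Real.cos (α i) ≤
      Real.cos (Real.pi / n) * ∑ i ∈ Finset.range n, (x i) ^ 2 := by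
  obtain ⟨p, rfl⟩ : ∃ p, n = p + 1 := ⟨n - 1, by omega⟩
  have hn0 : 0 < p + 1 := Nat.succ_pos p
  have hnR : (0 : ℝ) < (p : ℝ) + 1 := by positivity
  set θ : ℕ → ℝ := fun k => ∑ i ∈ range k, α i with hθ
  set v : ℕ → ℂ := fun k => ((x k : ℝ) : ℂ) * Complex.exp (((θ k : ℝ) : ℂ) * Complex.I) with hv
  have hpair : ∀ a b : ℕ, (v a * (starRingEnd ℂ) (v b)).re
      = x a * x b * Real.cos (θ a - θ b) := by
    intro a b
    rw [hv]
    exact pair_re (x a) (x b) (θ a) (θ b)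
  have hns : ∀ k, Complex.normSq (v k) = x k ^ 2 := by
    intro k
    rw [hv]
    exact normSq_aux (x k) (θ k)
  have hθs : ∀ k, θ (k + 1) - θ k = α k := by
    intro k
    simp [hθ, Finset.sum_range_succ]
  have hθ0 : θ 0 = 0 := by simp [hθ]
  have hlast : α p = Real.pi - θ p := by
    have h : θ p + α p = Real.pi := by
      rw [← hsum]
      simp [hθ, Finset.sum_range_succ]
    linarith
  have hA := lemA (p + 1) hn0 v
  have hB := lemB p v
  -- identify the RHS of hB with the goal's LHS sum
  have hBgoal : (∑ k ∈ range p, (v (k + 1) * (starRingEnd ℂ) (v k)).re) -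
        (v 0 * (starRingEnd ℂ) (v p)).re
      = ∑ i ∈ range (p + 1), x i * x ((i + 1) % (p + 1)) * Real.cos (α i) := by
    rw [Finset.sum_range_succ]
    have h1 : ∑ i ∈ range p, x i * x ((i + 1) % (p + 1)) * Real.cos (α i)
        = ∑ k ∈ range p, (v (k + 1) * (starRingEnd ℂ) (v k)).re := by
      refine Finset.sum_congr rfl fun i hi => ?_
      have hi' : i < p := Finset.mem_range.mp hi
      rw [Nat.mod_eq_of_lt (by omega), hpair, hθs]
      ring
    have h2 : x p * x ((p + 1) % (p + 1)) * Real.cos (α p)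
        = -(v 0 * (starRingEnd ℂ) (v p)).re := by
      rw [Nat.mod_self, hpair, hθ0, hlast, Real.cos_pi_sub, zero_sub, Real.cos_neg]
      ring
    rw [← h1, h2]
    ring
  rw [hBgoal] at hB
  -- termwise cosine bound
  have hbound : ∑ j ∈ range (p + 1),
        Real.cos ((2 * (j : ℝ) + 1) * Real.pi / ((p : ℝ) + 1)) *
          Complex.normSq (∑ k ∈ range (p + 1), v k * ee (p + 1) (-(2 * (j : ℤ) + 1) * (k : ℤ)))
      ≤ Real.cos (Real.pi / ((p : ℝ) + 1)) *
          ∑ j ∈ range (p + 1),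
            Complex.normSq (∑ k ∈ range (p + 1), v k * ee (p + 1) (-(2 * (j : ℤ) + 1) * (k : ℤ))) := by
    rw [Finset.mul_sum]
    apply Finset.sum_le_sum
    intro j hj
    have hcb := cos_bound (p + 1) hn0 j (Finset.mem_range.mp hj)
    push_cast at hcb
    exact mul_le_mul_of_nonneg_right hcb (Complex.normSq_nonneg _)
  -- put it together
  have hAx : ∑ k ∈ range (p + 1), Complex.normSq (v k) = ∑ k ∈ range (p + 1), x k ^ 2 :=
    Finset.sum_congr rfl fun k _ => hns k
  have hA' : ∑ j ∈ range (p + 1),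
      Complex.normSq (∑ k ∈ range (p + 1), v k * ee (p + 1) (-(2 * (j : ℤ) + 1) * (k : ℤ)))
      = ((p : ℝ) + 1) * ∑ k ∈ range (p + 1), x k ^ 2 := by
    rw [hA, hAx]
    push_cast
    ring
  rw [hA'] at hbound
  push_cast
  have hmul : ((p : ℝ) + 1) * (∑ i ∈ range (p + 1), x i * x ((i + 1) % (p + 1)) * Real.cos (α i))
      ≤ ((p : ℝ) + 1) * (Real.cos (Real.pi / ((p : ℝ) + 1)) * ∑ i ∈ range (p + 1), x i ^ 2) := by
    nlinarith [hbound]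
  exact le_of_mul_le_mul_left hmul hnR
end

section
/- Let a₁, a₂, a₃, a₄, a₅ and α₁, α₂, α₃, α₄, α₅ be positive real numbers with α₁ + α₂ + α₃ + α₄ + α₅ = π and such that a₁ ≤ a₂ ≤ a₃ ≤ a₄ ≤ a₅. Then a₁ cos α₁ + a₂ cos α₂ + a₃ cos α₃ + a₄ cos α₄ + a₅ cos α₅ ≤ ((1+√5)/4) · (1/(a₁a₂a₃a₄a₅)) · (a₁²a₅²a₂² + a₅²a₂²a₃² + a₂²a₃²a₄² + a₃²a₄²a₁² + a₄²a₁²a₅²). -/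
open Real

lemma pair_bound (a b P β γ : ℝ) (hP : 0 < P) :
    a * Real.cos β + b * Real.cos γ ≤
      (a ^ 2 + b ^ 2) / (2 * P) + P / 2 + (a * b / P) * Real.cos (β + γ) := by
  have key : 2 * P * (a * Real.cos β + b * Real.cos γ) ≤
      a ^ 2 + b ^ 2 + P ^ 2 +
        2 * a * b * (Real.cos β * Real.cos γ - Real.sin β * Real.sin γ) := by
    nlinarith [sq_nonneg (a * Real.cos β + b * Real.cos γ - P),
      sq_nonneg (a * Real.sin β - b * Real.sin γ),
      Real.sin_sq_add_cos_sq β, Real.sin_sq_add_cos_sq γ]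
  rw [Real.cos_add, ← sub_nonneg]
  have hrw : (a ^ 2 + b ^ 2) / (2 * P) + P / 2 +
      (a * b / P) * (Real.cos β * Real.cos γ - Real.sin β * Real.sin γ) -
      (a * Real.cos β + b * Real.cos γ)
      = (a ^ 2 + b ^ 2 + P ^ 2 +
          2 * a * b * (Real.cos β * Real.cos γ - Real.sin β * Real.sin γ) -
          2 * P * (a * Real.cos β + b * Real.cos γ)) / (2 * P) := by
    field_simp
  rw [hrw]
  apply div_nonneg (by linarith) (by linarith)

lemma tri_bound (x y z A B C : ℝ) (h : A + B + C = Real.pi) :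
    2 * y * z * Real.cos A + 2 * z * x * Real.cos B + 2 * x * y * Real.cos C ≤
      x ^ 2 + y ^ 2 + z ^ 2 := by
  have hC : Real.cos C = Real.sin A * Real.sin B - Real.cos A * Real.cos B := by
    have hCeq : C = Real.pi - (A + B) := by linarith
    rw [hCeq, Real.cos_pi_sub, Real.cos_add]
    ring
  rw [hC]
  nlinarith [sq_nonneg (z - y * Real.cos A - x * Real.cos B),
    sq_nonneg (y * Real.sin A - x * Real.sin B),
    Real.sin_sq_add_cos_sq A, Real.sin_sq_add_cos_sq B]

/-- **Pentagonal Inequality (strong form).** -/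
theorem pentagonal_inequality_strong
    (a₁ a₂ a₃ a₄ a₅ α₁ α₂ α₃ α₄ α₅ : ℝ)
    (ha₁ : 0 < a₁) (ha₂ : 0 < a₂) (ha₃ : 0 < a₃) (ha₄ : 0 < a₄) (ha₅ : 0 < a₅)
    (hα₁ : 0 < α₁) (hα₂ : 0 < α₂) (hα₃ : 0 < α₃) (hα₄ : 0 < α₄) (hα₅ : 0 < α₅)
    (hsum : α₁ + α₂ + α₃ + α₄ + α₅ = Real.pi)
    (h12 : a₁ ≤ a₂) (h23 : a₂ ≤ a₃) (h34 : a₃ ≤ a₄) (h45 : a₄ ≤ a₅) :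
    a₁ * Real.cos α₁ + a₂ * Real.cos α₂ + a₃ * Real.cos α₃ +
        a₄ * Real.cos α₄ + a₅ * Real.cos α₅ ≤
      ((1 + Real.sqrt 5) / 4) * (1 / (a₁ * a₂ * a₃ * a₄ * a₅)) *
        (a₁ ^ 2 * a₅ ^ 2 * a₂ ^ 2 + a₅ ^ 2 * a₂ ^ 2 * a₃ ^ 2 +
          a₂ ^ 2 * a₃ ^ 2 * a₄ ^ 2 + a₃ ^ 2 * a₄ ^ 2 * a₁ ^ 2 +
          a₄ ^ 2 * a₁ ^ 2 * a₅ ^ 2) := by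
  have h5 : Real.sqrt 5 ^ 2 = 5 := Real.sq_sqrt (by norm_num)
  have h5nn : (0:ℝ) ≤ Real.sqrt 5 := Real.sqrt_nonneg 5
  set φ : ℝ := (1 + Real.sqrt 5) / 2 with hφdef
  set t₁ : ℝ := a₁ * a₂ * a₅ / (a₃ * a₄) with ht₁
  set t₂ : ℝ := a₂ * a₃ * a₅ / (a₁ * a₄) with ht₂
  set t₃ : ℝ := a₂ * a₃ * a₄ / (a₁ * a₅) with ht₃
  set t₄ : ℝ := a₁ * a₃ * a₄ / (a₂ * a₅) with ht₄
  set t₅ : ℝ := a₁ * a₄ * a₅ / (a₂ * a₃) with ht₅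
  clear_value φ t₁ t₂ t₃ t₄ t₅
  have hφpos : 0 < φ := by rw [hφdef]; linarith
  have hφne : φ ≠ 0 := ne_of_gt hφpos
  have hφsq : φ ^ 2 = φ + 1 := by
    rw [hφdef]; linear_combination h5 / 4
  have ht₁p : 0 < t₁ := by rw [ht₁]; positivity
  have ht₂p : 0 < t₂ := by rw [ht₂]; positivity
  have ht₃p : 0 < t₃ := by rw [ht₃]; positivity
  have ht₄p : 0 < t₄ := by rw [ht₄]; positivity
  have ht₅p : 0 < t₅ := by rw [ht₅]; positivity
  -- square roots
  set s₂ : ℝ := Real.sqrt t₂ with hs₂def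
  set s₃ : ℝ := Real.sqrt t₃ with hs₃def
  set s₄ : ℝ := Real.sqrt t₄ with hs₄def
  clear_value s₂ s₃ s₄
  have hs₂sq : s₂ ^ 2 = t₂ := by rw [hs₂def]; exact Real.sq_sqrt ht₂p.le
  have hs₃sq : s₃ ^ 2 = t₃ := by rw [hs₃def]; exact Real.sq_sqrt ht₃p.le
  have hs₄sq : s₄ ^ 2 = t₄ := by rw [hs₄def]; exact Real.sq_sqrt ht₄p.le
  have hs24 : s₂ * s₄ = a₃ := by
    rw [hs₂def, hs₄def, ← Real.sqrt_mul ht₂p.le]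
    rw [show t₂ * t₄ = a₃ ^ 2 by rw [ht₂, ht₄]; field_simp]
    exact Real.sqrt_sq ha₃.le
  have hs34 : s₃ * s₄ = a₃ * a₄ / a₅ := by
    rw [hs₃def, hs₄def, ← Real.sqrt_mul ht₃p.le]
    rw [show t₃ * t₄ = (a₃ * a₄ / a₅) ^ 2 by rw [ht₃, ht₄]; field_simp]
    exact Real.sqrt_sq (by positivity)
  have hs23 : s₂ * s₃ = a₂ * a₃ / a₁ := by
    rw [hs₂def, hs₃def, ← Real.sqrt_mul ht₂p.le]
    rw [show t₂ * t₃ = (a₂ * a₃ / a₁) ^ 2 by rw [ht₂, ht₃]; field_simp]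
    exact Real.sqrt_sq (by positivity)
  -- bound 1 : combine α₁, α₂
  have b1 := pair_bound a₁ a₂ (φ * t₁) α₁ α₂ (mul_pos hφpos ht₁p)
  have e1 : (a₁ ^ 2 + a₂ ^ 2) / (2 * (φ * t₁)) = (t₃ + t₄) / (2 * φ) := by
    rw [ht₁, ht₃, ht₄]; field_simp; ring
  have e2 : a₁ * a₂ / (φ * t₁) = a₃ * a₄ / (φ * a₅) := by
    rw [ht₁]; field_simp
  rw [e1, e2] at b1
  -- bound 2 : combine α₄, α₅
  have b2 := pair_bound a₄ a₅ (φ * t₅) α₄ α₅ (mul_pos hφpos ht₅p)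
  have e3 : (a₄ ^ 2 + a₅ ^ 2) / (2 * (φ * t₅)) = (t₂ + t₃) / (2 * φ) := by
    rw [ht₅, ht₂, ht₃]; field_simp; ring
  have e4 : a₄ * a₅ / (φ * t₅) = a₂ * a₃ / (φ * a₁) := by
    rw [ht₅]; field_simp
  rw [e3, e4] at b2
  -- bound 3 : triangle inequality on (α₁+α₂), α₃, (α₄+α₅)
  have hABC : (α₁ + α₂) + α₃ + (α₄ + α₅) = Real.pi := by linarith
  have b3 := tri_bound s₂ (s₃ / φ) s₄ (α₁ + α₂) α₃ (α₄ + α₅) hABC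
  have e5 : 2 * (s₃ / φ) * s₄ * Real.cos (α₁ + α₂)
      = 2 * (a₃ * a₄ / (φ * a₅) * Real.cos (α₁ + α₂)) := by
    rw [show 2 * (s₃ / φ) * s₄ = 2 * ((s₃ * s₄) / φ) by ring, hs34]; field_simp
  have e6 : 2 * s₄ * s₂ * Real.cos α₃ = 2 * (a₃ * Real.cos α₃) := by
    rw [show 2 * s₄ * s₂ = 2 * (s₂ * s₄) by ring, hs24]; ring
  have e7 : 2 * s₂ * (s₃ / φ) * Real.cos (α₄ + α₅)
      = 2 * (a₂ * a₃ / (φ * a₁) * Real.cos (α₄ + α₅)) := by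
    rw [show 2 * s₂ * (s₃ / φ) = 2 * ((s₂ * s₃) / φ) by ring, hs23]; field_simp
  have e8 : s₂ ^ 2 + (s₃ / φ) ^ 2 + s₄ ^ 2 = t₂ + t₃ / φ ^ 2 + t₄ := by
    rw [div_pow, hs₂sq, hs₃sq, hs₄sq]
  rw [e5, e6, e7, e8] at b3
  -- scalar identities from φ² = φ + 1
  have c1 : 1 / (2 * φ) + 1 / 2 = φ / 2 := by
    field_simp
    linear_combination (-1 : ℝ) * hφsq
  have c2 : 1 / (2 * φ) + 1 / (2 * φ) + 1 / (2 * φ ^ 2) = φ / 2 := by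
    field_simp
    linear_combination (-(φ + 1)) * hφsq
  -- the assembled bound equals the right-hand side
  have hA : (t₃ + t₄) / (2 * φ) + φ * t₁ / 2 + (t₂ + t₃) / (2 * φ) + φ * t₅ / 2 +
      (t₂ + t₃ / φ ^ 2 + t₄) / 2 = φ / 2 * (t₁ + t₂ + t₃ + t₄ + t₅) := by
    linear_combination (t₂ + t₄) * c1 + t₃ * c2
  have hB : φ / 2 * (t₁ + t₂ + t₃ + t₄ + t₅)
      = ((1 + Real.sqrt 5) / 4) * (1 / (a₁ * a₂ * a₃ * a₄ * a₅)) *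
        (a₁ ^ 2 * a₅ ^ 2 * a₂ ^ 2 + a₅ ^ 2 * a₂ ^ 2 * a₃ ^ 2 +
          a₂ ^ 2 * a₃ ^ 2 * a₄ ^ 2 + a₃ ^ 2 * a₄ ^ 2 * a₁ ^ 2 +
          a₄ ^ 2 * a₁ ^ 2 * a₅ ^ 2) := by
    rw [hφdef, ht₁, ht₂, ht₃, ht₄, ht₅]
    field_simp
    ring
  linarith [b1, b2, b3]
end

section
/- Let a₁, a₂, a₃, a₄, a₅ and α₁, α₂, α₃, α₄, α₅ be positive real numbers with α₁ + α₂ + α₃ + α₄ + α₅ = π. Then a₁ cos α₁ + a₂ cos α₂ + a₃ cos α₃ + a₄ cos α₄ + a₅ cos α₅ ≤ ((1+√5)/4) · (1/(a₁a₂a₃a₄a₅)) · (a₁²a₂²a₃² + a₂²a₃²a₄² + a₃²a₄²a₅² + a₄²a₅²a₁² + a₅²a₁²a₂²). -/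
open Real

/-- Scalar quadratic form inequality: the signed 5-cycle form is bounded by `cos(π/5)` times
the sum of squares. -/
lemma pentagon_scalar5 (x₁ x₂ x₃ x₄ x₅ : ℝ) :
    x₁*x₂ + x₂*x₃ + x₃*x₄ + x₄*x₅ - x₅*x₁ ≤
      (1 + Real.sqrt 5)/4 * (x₁^2 + x₂^2 + x₃^2 + x₄^2 + x₅^2) := by
  have hr : Real.sqrt 5 ^ 2 = 5 := Real.sq_sqrt (by norm_num)
  have hr1 : (1:ℝ) ≤ Real.sqrt 5 := by
    nlinarith [Real.sqrt_nonneg 5, Real.sq_sqrt (show (0:ℝ) ≤ 5 by norm_num)]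
  have h1 : 0 ≤ (1 + Real.sqrt 5) *
      (2*x₁ + (1 - Real.sqrt 5)*x₂ + (Real.sqrt 5 - 1)*x₅)^2 :=
    mul_nonneg (by linarith) (sq_nonneg _)
  have h2 : 0 ≤ (2*x₂ - 2*x₃ + (Real.sqrt 5 - 1)*x₅)^2 := sq_nonneg _
  have h3 : 0 ≤ (Real.sqrt 5 - 1) *
      (2*x₃ - (1 + Real.sqrt 5)*x₄ + 2*x₅)^2 :=
    mul_nonneg (by linarith) (sq_nonneg _)
  have hkey : 16*((1 + Real.sqrt 5)/4 * (x₁^2 + x₂^2 + x₃^2 + x₄^2 + x₅^2)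
        - (x₁*x₂ + x₂*x₃ + x₃*x₄ + x₄*x₅ - x₅*x₁))
      = (1 + Real.sqrt 5) * (2*x₁ + (1 - Real.sqrt 5)*x₂ + (Real.sqrt 5 - 1)*x₅)^2
        + 2 * (2*x₂ - 2*x₃ + (Real.sqrt 5 - 1)*x₅)^2
        + (Real.sqrt 5 - 1) * (2*x₃ - (1 + Real.sqrt 5)*x₄ + 2*x₅)^2 := by
    linear_combination (-x₅^2 + 4*x₄*x₅ - x₄^2 + 4*x₃*x₄ - 2*x₂*x₅ + x₂^2 - 4*x₁*x₅ + 4*x₁*x₂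
      + Real.sqrt 5 * (-x₅^2 - x₄^2 + 2*x₂*x₅ - x₂^2)) * hr
  linarith [h1, h2, h3, hkey]

/-- Key lemma: cyclic sum with angles summing to π. -/
lemma pentagon_key5 (z₁ z₂ z₃ z₄ z₅ β₁ β₂ β₃ β₄ : ℝ) :
    z₁*z₂*Real.cos β₁ + z₂*z₃*Real.cos β₂ + z₃*z₄*Real.cos β₃ + z₄*z₅*Real.cos β₄
      + z₅*z₁*Real.cos (Real.pi - (β₁+β₂+β₃+β₄)) ≤
    (1 + Real.sqrt 5)/4 * (z₁^2 + z₂^2 + z₃^2 + z₄^2 + z₅^2) := by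
  have h2 : Real.cos β₂ = Real.cos (β₁+β₂) * Real.cos β₁ + Real.sin (β₁+β₂) * Real.sin β₁ := by
    have := Real.cos_sub (β₁+β₂) β₁
    rw [show β₁+β₂-β₁ = β₂ by ring] at this
    exact this
  have h3 : Real.cos β₃ = Real.cos (β₁+β₂+β₃) * Real.cos (β₁+β₂)
      + Real.sin (β₁+β₂+β₃) * Real.sin (β₁+β₂) := by
    have := Real.cos_sub (β₁+β₂+β₃) (β₁+β₂)
    rw [show β₁+β₂+β₃-(β₁+β₂) = β₃ by ring] at this
    exact this
  have h4 : Real.cos β₄ = Real.cos (β₁+β₂+β₃+β₄) * Real.cos (β₁+β₂+β₃)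
      + Real.sin (β₁+β₂+β₃+β₄) * Real.sin (β₁+β₂+β₃) := by
    have := Real.cos_sub (β₁+β₂+β₃+β₄) (β₁+β₂+β₃)
    rw [show β₁+β₂+β₃+β₄-(β₁+β₂+β₃) = β₄ by ring] at this
    exact this
  have h5 : Real.cos (Real.pi - (β₁+β₂+β₃+β₄)) = - Real.cos (β₁+β₂+β₃+β₄) :=
    Real.cos_pi_sub _
  have A := pentagon_scalar5 z₁ (z₂ * Real.cos β₁) (z₃ * Real.cos (β₁+β₂))
      (z₄ * Real.cos (β₁+β₂+β₃)) (z₅ * Real.cos (β₁+β₂+β₃+β₄))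
  have B := pentagon_scalar5 0 (z₂ * Real.sin β₁) (z₃ * Real.sin (β₁+β₂))
      (z₄ * Real.sin (β₁+β₂+β₃)) (z₅ * Real.sin (β₁+β₂+β₃+β₄))
  have t1 := Real.sin_sq_add_cos_sq β₁
  have t2 := Real.sin_sq_add_cos_sq (β₁+β₂)
  have t3 := Real.sin_sq_add_cos_sq (β₁+β₂+β₃)
  have t4 := Real.sin_sq_add_cos_sq (β₁+β₂+β₃+β₄)
  calc z₁*z₂*Real.cos β₁ + z₂*z₃*Real.cos β₂ + z₃*z₄*Real.cos β₃ + z₄*z₅*Real.cos β₄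
      + z₅*z₁*Real.cos (Real.pi - (β₁+β₂+β₃+β₄))
      = (z₁*(z₂ * Real.cos β₁) + (z₂ * Real.cos β₁)*(z₃ * Real.cos (β₁+β₂))
          + (z₃ * Real.cos (β₁+β₂))*(z₄ * Real.cos (β₁+β₂+β₃))
          + (z₄ * Real.cos (β₁+β₂+β₃))*(z₅ * Real.cos (β₁+β₂+β₃+β₄))
          - (z₅ * Real.cos (β₁+β₂+β₃+β₄))*z₁)
        + ((0:ℝ)*(z₂ * Real.sin β₁) + (z₂ * Real.sin β₁)*(z₃ * Real.sin (β₁+β₂))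
          + (z₃ * Real.sin (β₁+β₂))*(z₄ * Real.sin (β₁+β₂+β₃))
          + (z₄ * Real.sin (β₁+β₂+β₃))*(z₅ * Real.sin (β₁+β₂+β₃+β₄))
          - (z₅ * Real.sin (β₁+β₂+β₃+β₄))*0) := by
        rw [h2, h3, h4, h5]; ring
    _ ≤ (1 + Real.sqrt 5)/4 * (z₁^2 + (z₂ * Real.cos β₁)^2 + (z₃ * Real.cos (β₁+β₂))^2
          + (z₄ * Real.cos (β₁+β₂+β₃))^2 + (z₅ * Real.cos (β₁+β₂+β₃+β₄))^2)
        + (1 + Real.sqrt 5)/4 * ((0:ℝ)^2 + (z₂ * Real.sin β₁)^2 + (z₃ * Real.sin (β₁+β₂))^2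
          + (z₄ * Real.sin (β₁+β₂+β₃))^2 + (z₅ * Real.sin (β₁+β₂+β₃+β₄))^2) :=
        add_le_add A B
    _ = (1 + Real.sqrt 5)/4 * (z₁^2 + z₂^2 + z₃^2 + z₄^2 + z₅^2) := by
        linear_combination ((1 + Real.sqrt 5)/4) * (z₂^2 * t1 + z₃^2 * t2 + z₄^2 * t3
          + z₅^2 * t4)

/-- **Pentagonal Inequality (normal form).** -/
theorem pentagonal_inequality_normal
    (a₁ a₂ a₃ a₄ a₅ α₁ α₂ α₃ α₄ α₅ : ℝ)
    (ha₁ : 0 < a₁) (ha₂ : 0 < a₂) (ha₃ : 0 < a₃) (ha₄ : 0 < a₄) (ha₅ : 0 < a₅)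
    (hα₁ : 0 < α₁) (hα₂ : 0 < α₂) (hα₃ : 0 < α₃) (hα₄ : 0 < α₄) (hα₅ : 0 < α₅)
    (hsum : α₁ + α₂ + α₃ + α₄ + α₅ = Real.pi) :
    a₁ * Real.cos α₁ + a₂ * Real.cos α₂ + a₃ * Real.cos α₃ +
        a₄ * Real.cos α₄ + a₅ * Real.cos α₅ ≤
      ((1 + Real.sqrt 5) / 4) * (1 / (a₁ * a₂ * a₃ * a₄ * a₅)) *
        (a₁ ^ 2 * a₂ ^ 2 * a₃ ^ 2 + a₂ ^ 2 * a₃ ^ 2 * a₄ ^ 2 +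
          a₃ ^ 2 * a₄ ^ 2 * a₅ ^ 2 + a₄ ^ 2 * a₅ ^ 2 * a₁ ^ 2 +
          a₅ ^ 2 * a₁ ^ 2 * a₂ ^ 2) := by
  have hP : 0 < a₁ * a₂ * a₃ * a₄ * a₅ := by positivity
  set s := Real.sqrt (a₁ * a₂ * a₃ * a₄ * a₅) with hs_def
  have hs : 0 < s := Real.sqrt_pos.mpr hP
  have hs2 : s ^ 2 = a₁ * a₂ * a₃ * a₄ * a₅ := Real.sq_sqrt hP.le
  have key := pentagon_key5 (a₁*a₂*a₃/s) (a₃*a₄*a₅/s) (a₅*a₁*a₂/s) (a₂*a₃*a₄/s)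
      (a₄*a₅*a₁/s) α₃ α₅ α₂ α₄
  rw [show Real.pi - (α₃+α₅+α₂+α₄) = α₁ from by linarith] at key
  have e1 : (a₁*a₂*a₃/s)*(a₃*a₄*a₅/s) = a₃ := by
    rw [div_mul_div_comm, ← pow_two]
    rw [show _ * _ = a₃ * s ^ 2 from by rw [hs2]; ring]
    exact mul_div_cancel_right₀ _ (by positivity)
  have e2 : (a₃*a₄*a₅/s)*(a₅*a₁*a₂/s) = a₅ := by
    rw [div_mul_div_comm, ← pow_two]
    rw [show _ * _ = a₅ * s ^ 2 from by rw [hs2]; ring]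
    exact mul_div_cancel_right₀ _ (by positivity)
  have e3 : (a₅*a₁*a₂/s)*(a₂*a₃*a₄/s) = a₂ := by
    rw [div_mul_div_comm, ← pow_two]
    rw [show _ * _ = a₂ * s ^ 2 from by rw [hs2]; ring]
    exact mul_div_cancel_right₀ _ (by positivity)
  have e4 : (a₂*a₃*a₄/s)*(a₄*a₅*a₁/s) = a₄ := by
    rw [div_mul_div_comm, ← pow_two]
    rw [show _ * _ = a₄ * s ^ 2 from by rw [hs2]; ring]
    exact mul_div_cancel_right₀ _ (by positivity)
  have e5 : (a₄*a₅*a₁/s)*(a₁*a₂*a₃/s) = a₁ := by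
    rw [div_mul_div_comm, ← pow_two]
    rw [show _ * _ = a₁ * s ^ 2 from by rw [hs2]; ring]
    exact mul_div_cancel_right₀ _ (by positivity)
  calc a₁ * Real.cos α₁ + a₂ * Real.cos α₂ + a₃ * Real.cos α₃ +
        a₄ * Real.cos α₄ + a₅ * Real.cos α₅
      = (a₁*a₂*a₃/s)*(a₃*a₄*a₅/s)*Real.cos α₃ + (a₃*a₄*a₅/s)*(a₅*a₁*a₂/s)*Real.cos α₅
        + (a₅*a₁*a₂/s)*(a₂*a₃*a₄/s)*Real.cos α₂ + (a₂*a₃*a₄/s)*(a₄*a₅*a₁/s)*Real.cos α₄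
        + (a₄*a₅*a₁/s)*(a₁*a₂*a₃/s)*Real.cos α₁ := by
        rw [e1, e2, e3, e4, e5]; ring
    _ ≤ (1 + Real.sqrt 5)/4 * ((a₁*a₂*a₃/s)^2 + (a₃*a₄*a₅/s)^2 + (a₅*a₁*a₂/s)^2
          + (a₂*a₃*a₄/s)^2 + (a₄*a₅*a₁/s)^2) := key
    _ = ((1 + Real.sqrt 5) / 4) * (1 / (a₁ * a₂ * a₃ * a₄ * a₅)) *
        (a₁ ^ 2 * a₂ ^ 2 * a₃ ^ 2 + a₂ ^ 2 * a₃ ^ 2 * a₄ ^ 2 +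
          a₃ ^ 2 * a₄ ^ 2 * a₅ ^ 2 + a₄ ^ 2 * a₅ ^ 2 * a₁ ^ 2 +
          a₅ ^ 2 * a₁ ^ 2 * a₂ ^ 2) := by
        rw [div_pow, div_pow, div_pow, div_pow, div_pow, hs2]
        ring
end

section
/- Let a₁ ≤ a₂ ≤ a₃ ≤ a₄ ≤ a₅ be positive real numbers. Then for every permutation σ of {1,2,3,4,5}, one has φ(a₁, a₅, a₂, a₃, a₄) ≤ φ(a_{σ(1)}, a_{σ(2)}, a_{σ(3)}, a_{σ(4)}, a_{σ(5)}). In other words, the circular arrangement (a₁, a₅, a₂, a₃, a₄) minimizes φ over all arrangements of a₁, ..., a₅. -/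
/-- `φ(x₁, x₂, x₃, x₄, x₅) = x₁x₂x₃ + x₂x₃x₄ + x₃x₄x₅ + x₄x₅x₁ + x₅x₁x₂`. -/
def phi (x₁ x₂ x₃ x₄ x₅ : ℝ) : ℝ :=
  x₁ * x₂ * x₃ + x₂ * x₃ * x₄ + x₃ * x₄ * x₅ + x₄ * x₅ * x₁ + x₅ * x₁ * x₂

set_option maxHeartbeats 1000000 in
/-- The arrangement `(a₁, a₅, a₂, a₃, a₄)` minimizes `φ` over all
arrangements of positive reals `a₁ ≤ a₂ ≤ a₃ ≤ a₄ ≤ a₅`. -/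
theorem phi_min_arrangement (a : Fin 5 → ℝ)
    (hpos : ∀ i, 0 < a i)
    (h01 : a 0 ≤ a 1) (h12 : a 1 ≤ a 2) (h23 : a 2 ≤ a 3) (h34 : a 3 ≤ a 4)
    (σ : Equiv.Perm (Fin 5)) :
    phi (a 0) (a 4) (a 1) (a 2) (a 3) ≤
      phi (a (σ 0)) (a (σ 1)) (a (σ 2)) (a (σ 3)) (a (σ 4)) := by
  simp only [phi]
  have h02 : a 0 ≤ a 2 := h01.trans h12
  have h03 : a 0 ≤ a 3 := h02.trans h23
  have h04 : a 0 ≤ a 4 := h03.trans h34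
  have h13 : a 1 ≤ a 3 := h12.trans h23
  have h14 : a 1 ≤ a 4 := h13.trans h34
  have h24 : a 2 ≤ a 4 := h23.trans h34
  have h5 : ∀ n : Fin 5, n = 0 ∨ n = 1 ∨ n = 2 ∨ n = 3 ∨ n = 4 := by decide
  obtain ⟨n0, hn0⟩ : ∃ n, σ 0 = n := ⟨_, rfl⟩
  obtain ⟨n1, hn1⟩ : ∃ n, σ 1 = n := ⟨_, rfl⟩
  obtain ⟨n2, hn2⟩ : ∃ n, σ 2 = n := ⟨_, rfl⟩
  obtain ⟨n3, hn3⟩ : ∃ n, σ 3 = n := ⟨_, rfl⟩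
  obtain ⟨n4, hn4⟩ : ∃ n, σ 4 = n := ⟨_, rfl⟩
  have d01 : n0 ≠ n1 := fun h => by
    have := σ.injective (hn0.trans (h ▸ hn1.symm)); exact absurd this (by decide)
  have d02 : n0 ≠ n2 := fun h => by
    have := σ.injective (hn0.trans (h ▸ hn2.symm)); exact absurd this (by decide)
  have d03 : n0 ≠ n3 := fun h => by
    have := σ.injective (hn0.trans (h ▸ hn3.symm)); exact absurd this (by decide)
  have d04 : n0 ≠ n4 := fun h => by
    have := σ.injective (hn0.trans (h ▸ hn4.symm)); exact absurd this (by decide)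
  have d12 : n1 ≠ n2 := fun h => by
    have := σ.injective (hn1.trans (h ▸ hn2.symm)); exact absurd this (by decide)
  have d13 : n1 ≠ n3 := fun h => by
    have := σ.injective (hn1.trans (h ▸ hn3.symm)); exact absurd this (by decide)
  have d14 : n1 ≠ n4 := fun h => by
    have := σ.injective (hn1.trans (h ▸ hn4.symm)); exact absurd this (by decide)
  have d23 : n2 ≠ n3 := fun h => by
    have := σ.injective (hn2.trans (h ▸ hn3.symm)); exact absurd this (by decide)
  have d24 : n2 ≠ n4 := fun h => by
    have := σ.injective (hn2.trans (h ▸ hn4.symm)); exact absurd this (by decide)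
  have d34 : n3 ≠ n4 := fun h => by
    have := σ.injective (hn3.trans (h ▸ hn4.symm)); exact absurd this (by decide)
  rw [hn0, hn1, hn2, hn3, hn4]
  rcases h5 n0 with rfl|rfl|rfl|rfl|rfl <;>
  rcases h5 n1 with rfl|rfl|rfl|rfl|rfl <;>
  first
  | exact absurd rfl d01
  | (rcases h5 n2 with rfl|rfl|rfl|rfl|rfl <;>
     first
     | exact absurd rfl d02
     | exact absurd rfl d12
     | (rcases h5 n3 with rfl|rfl|rfl|rfl|rfl <;>
        first
        | exact absurd rfl d03
        | exact absurd rfl d13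
        | exact absurd rfl d23
        | (rcases h5 n4 with rfl|rfl|rfl|rfl|rfl <;>
           first
           | exact absurd rfl d04
           | exact absurd rfl d14
           | exact absurd rfl d24
           | exact absurd rfl d34
           | linarith [mul_nonneg (hpos 0).le (mul_nonneg (sub_nonneg.2 h12) (sub_nonneg.2 h34)),
      mul_nonneg (hpos 1).le (mul_nonneg (sub_nonneg.2 h01) (sub_nonneg.2 h23)),
      mul_nonneg (hpos 1).le (mul_nonneg (sub_nonneg.2 h03) (sub_nonneg.2 h24)),
      mul_nonneg (hpos 1).le (mul_nonneg (sub_nonneg.2 h23) (sub_nonneg.2 h04)),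
      mul_nonneg (hpos 2).le (mul_nonneg (sub_nonneg.2 h03) (sub_nonneg.2 h14)),
      mul_nonneg (hpos 2).le (mul_nonneg (sub_nonneg.2 h13) (sub_nonneg.2 h04)),
      mul_nonneg (hpos 2).le (mul_nonneg (sub_nonneg.2 h13) (sub_nonneg.2 h14)),
      mul_nonneg (hpos 3).le (mul_nonneg (sub_nonneg.2 h01) (sub_nonneg.2 h14)),
      mul_nonneg (hpos 3).le (mul_nonneg (sub_nonneg.2 h01) (sub_nonneg.2 h24)),
      mul_nonneg (hpos 3).le (mul_nonneg (sub_nonneg.2 h02) (sub_nonneg.2 h14)),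
      mul_nonneg (hpos 3).le (mul_nonneg (sub_nonneg.2 h12) (sub_nonneg.2 h04)),
      mul_nonneg (hpos 4).le (mul_nonneg (sub_nonneg.2 h01) (sub_nonneg.2 h23))])))
end

section
/- Let a₁, a₂, a₃, a₄, a₅ and α₁, α₂, α₃, α₄, α₅ be positive real numbers with α₁ + α₂ + α₃ + α₄ + α₅ = π, and let (b₁, b₂, b₃, b₄, b₅) be any circular permutation of (a₁, a₂, a₃, a₄, a₅) with b₁ = a₁. Then ∑_{i=1}^5 bᵢ cos αᵢ ≤ ((1+√5)/4) · (1/(b₁b₂b₃b₄b₅)) · φ(b₁², b₂², b₃², b₄², b₅²). -/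
open Real

/-- Signed 5-cycle quadratic form bound: the largest eigenvalue of the
5-cycle with one negative edge is `2 cos (π/5) = (1+√5)/2`. -/
lemma signed_cycle_bound (y₁ y₂ y₃ y₄ y₅ : ℝ) :
    y₁*y₂ + y₂*y₃ + y₃*y₄ + y₄*y₅ - y₅*y₁ ≤
      (1 + Real.sqrt 5)/4 * (y₁^2 + y₂^2 + y₃^2 + y₄^2 + y₅^2) := by
  have hs : Real.sqrt 5 ^ 2 = 5 := Real.sq_sqrt (by norm_num)
  have hs1 : 1 ≤ Real.sqrt 5 := by
    nlinarith [Real.sqrt_nonneg 5]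
  have h1 : 0 ≤ (1 + Real.sqrt 5) *
      (2*y₁ + (1 - Real.sqrt 5)*y₂ + (Real.sqrt 5 - 1)*y₅)^2 :=
    mul_nonneg (by linarith) (sq_nonneg _)
  have h2 : 0 ≤ (2*y₂ - 2*y₃ + (Real.sqrt 5 - 1)*y₅)^2 := sq_nonneg _
  have h3 : 0 ≤ (Real.sqrt 5 - 1) *
      (2*y₃ - (1 + Real.sqrt 5)*y₄ + 2*y₅)^2 :=
    mul_nonneg (by linarith) (sq_nonneg _)
  have id : 4*(1 + Real.sqrt 5)*(y₁^2 + y₂^2 + y₃^2 + y₄^2 + y₅^2)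
      - 16*(y₁*y₂ + y₂*y₃ + y₃*y₄ + y₄*y₅ - y₅*y₁)
      = (1 + Real.sqrt 5) * (2*y₁ + (1 - Real.sqrt 5)*y₂ + (Real.sqrt 5 - 1)*y₅)^2
        + 2 * (2*y₂ - 2*y₃ + (Real.sqrt 5 - 1)*y₅)^2
        + (Real.sqrt 5 - 1) * (2*y₃ - (1 + Real.sqrt 5)*y₄ + 2*y₅)^2 := by
    linear_combination (-y₅^2 + 4*y₄*y₅ - y₄^2 + 4*y₃*y₄ - 2*y₂*y₅ + y₂^2
      - 4*y₁*y₅ + 4*y₁*y₂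
      + Real.sqrt 5 * (-y₅^2 - y₄^2 + 2*y₂*y₅ - y₂^2)) * hs
  linarith [h1, h2, h3, id]

/-- **Lemma 2.** For any circular permutation `(b₁, …, b₅)` of `(a₁, …, a₅)`
with `b₁ = a₁`, i.e. `(b₂, b₃, b₄, b₅)` is a permutation of `(a₂, a₃, a₄, a₅)`,
we have `∑ bᵢ cos αᵢ ≤ ((1+√5)/4) · (1/(b₁b₂b₃b₄b₅)) · φ(b₁², b₂², b₃², b₄², b₅²)`. -/
theorem pentagonal_circular_perm
    (a₁ a₂ a₃ a₄ a₅ α₁ α₂ α₃ α₄ α₅ b₁ b₂ b₃ b₄ b₅ : ℝ)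
    (ha₁ : 0 < a₁) (ha₂ : 0 < a₂) (ha₃ : 0 < a₃) (ha₄ : 0 < a₄) (ha₅ : 0 < a₅)
    (hα₁ : 0 < α₁) (hα₂ : 0 < α₂) (hα₃ : 0 < α₃) (hα₄ : 0 < α₄) (hα₅ : 0 < α₅)
    (hsum : α₁ + α₂ + α₃ + α₄ + α₅ = Real.pi)
    (hb₁ : b₁ = a₁)
    (hperm : List.Perm [b₂, b₃, b₄, b₅] [a₂, a₃, a₄, a₅]) :
    b₁ * Real.cos α₁ + b₂ * Real.cos α₂ + b₃ * Real.cos α₃ +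
        b₄ * Real.cos α₄ + b₅ * Real.cos α₅ ≤
      ((1 + Real.sqrt 5) / 4) * (1 / (b₁ * b₂ * b₃ * b₄ * b₅)) *
        phi (b₁ ^ 2) (b₂ ^ 2) (b₃ ^ 2) (b₄ ^ 2) (b₅ ^ 2) := by
  -- positivity of the bᵢ
  have hpos : ∀ x ∈ [b₂, b₃, b₄, b₅], 0 < x := by
    intro x hx
    have hx' : x ∈ [a₂, a₃, a₄, a₅] := hperm.subset hx
    simp only [List.mem_cons, List.mem_singleton, List.not_mem_nil, or_false] at hx'
    rcases hx' with h | h | h | h <;> rw [h] <;> assumption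
  have hb2 : 0 < b₂ := hpos b₂ (by simp)
  have hb3 : 0 < b₃ := hpos b₃ (by simp)
  have hb4 : 0 < b₄ := hpos b₄ (by simp)
  have hb5 : 0 < b₅ := hpos b₅ (by simp)
  have hb1 : 0 < b₁ := hb₁ ▸ ha₁
  -- cumulative angles
  set θ₂ : ℝ := α₃ with hθ₂
  set θ₃ : ℝ := α₃ + α₅ with hθ₃
  set θ₄ : ℝ := α₃ + α₅ + α₂ with hθ₄
  set θ₅ : ℝ := α₃ + α₅ + α₂ + α₄ with hθ₅
  -- the five "triple product" quantities, in pentagram order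
  set n₁ : ℝ := b₁ * b₂ * b₃ with hn₁
  set n₂ : ℝ := b₃ * b₄ * b₅ with hn₂
  set n₃ : ℝ := b₅ * b₁ * b₂ with hn₃
  set n₄ : ℝ := b₂ * b₃ * b₄ with hn₄
  set n₅ : ℝ := b₄ * b₅ * b₁ with hn₅
  have h1 := signed_cycle_bound n₁ (n₂ * Real.cos θ₂) (n₃ * Real.cos θ₃)
    (n₄ * Real.cos θ₄) (n₅ * Real.cos θ₅)
  have h2 := signed_cycle_bound 0 (n₂ * Real.sin θ₂) (n₃ * Real.sin θ₃)
    (n₄ * Real.sin θ₄) (n₅ * Real.sin θ₅)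
  -- trig identities
  have e23 : Real.cos θ₃ * Real.cos θ₂ + Real.sin θ₃ * Real.sin θ₂ = Real.cos α₅ := by
    rw [← Real.cos_sub]; congr 1; rw [hθ₂, hθ₃]; ring
  have e34 : Real.cos θ₄ * Real.cos θ₃ + Real.sin θ₄ * Real.sin θ₃ = Real.cos α₂ := by
    rw [← Real.cos_sub]; congr 1; rw [hθ₃, hθ₄]; ring
  have e45 : Real.cos θ₅ * Real.cos θ₄ + Real.sin θ₅ * Real.sin θ₄ = Real.cos α₄ := by
    rw [← Real.cos_sub]; congr 1; rw [hθ₄, hθ₅]; ring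
  have e5 : Real.cos θ₅ = - Real.cos α₁ := by
    have : θ₅ = Real.pi - α₁ := by rw [hθ₅]; linarith
    rw [this, Real.cos_pi_sub]
  have p2 : Real.sin θ₂ ^ 2 + Real.cos θ₂ ^ 2 = 1 := Real.sin_sq_add_cos_sq θ₂
  have p3 : Real.sin θ₃ ^ 2 + Real.cos θ₃ ^ 2 = 1 := Real.sin_sq_add_cos_sq θ₃
  have p4 : Real.sin θ₄ ^ 2 + Real.cos θ₄ ^ 2 = 1 := Real.sin_sq_add_cos_sq θ₄
  have p5 : Real.sin θ₅ ^ 2 + Real.cos θ₅ ^ 2 = 1 := Real.sin_sq_add_cos_sq θ₅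
  -- premultiplied versions so that linear arithmetic can use them
  have e23' : n₂ * n₃ * (Real.cos θ₃ * Real.cos θ₂ + Real.sin θ₃ * Real.sin θ₂)
      = n₂ * n₃ * Real.cos α₅ := by rw [e23]
  have e34' : n₃ * n₄ * (Real.cos θ₄ * Real.cos θ₃ + Real.sin θ₄ * Real.sin θ₃)
      = n₃ * n₄ * Real.cos α₂ := by rw [e34]
  have e45' : n₄ * n₅ * (Real.cos θ₅ * Real.cos θ₄ + Real.sin θ₅ * Real.sin θ₄)
      = n₄ * n₅ * Real.cos α₄ := by rw [e45]
  have e5' : n₅ * n₁ * Real.cos θ₅ = - (n₅ * n₁ * Real.cos α₁) := by rw [e5]; ring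
  have p2' : n₂^2 * (Real.sin θ₂ ^ 2 + Real.cos θ₂ ^ 2) = n₂^2 := by rw [p2]; ring
  have p3' : n₃^2 * (Real.sin θ₃ ^ 2 + Real.cos θ₃ ^ 2) = n₃^2 := by rw [p3]; ring
  have p4' : n₄^2 * (Real.sin θ₄ ^ 2 + Real.cos θ₄ ^ 2) = n₄^2 := by rw [p4]; ring
  have p5' : n₅^2 * (Real.sin θ₅ ^ 2 + Real.cos θ₅ ^ 2) = n₅^2 := by rw [p5]; ring
  have p2'' : (1 + Real.sqrt 5)/4 * (n₂^2 * (Real.sin θ₂ ^ 2 + Real.cos θ₂ ^ 2))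
      = (1 + Real.sqrt 5)/4 * n₂^2 := by rw [p2']
  have p3'' : (1 + Real.sqrt 5)/4 * (n₃^2 * (Real.sin θ₃ ^ 2 + Real.cos θ₃ ^ 2))
      = (1 + Real.sqrt 5)/4 * n₃^2 := by rw [p3']
  have p4'' : (1 + Real.sqrt 5)/4 * (n₄^2 * (Real.sin θ₄ ^ 2 + Real.cos θ₄ ^ 2))
      = (1 + Real.sqrt 5)/4 * n₄^2 := by rw [p4']
  have p5'' : (1 + Real.sqrt 5)/4 * (n₅^2 * (Real.sin θ₅ ^ 2 + Real.cos θ₅ ^ 2))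
      = (1 + Real.sqrt 5)/4 * n₅^2 := by rw [p5']
  have hcθ₂ : Real.cos θ₂ = Real.cos α₃ := by rw [hθ₂]
  have big : Real.cos α₃ * (n₁ * n₂) + Real.cos α₅ * (n₂ * n₃) +
      Real.cos α₂ * (n₃ * n₄) + Real.cos α₄ * (n₄ * n₅) +
      Real.cos α₁ * (n₅ * n₁) ≤
      (1 + Real.sqrt 5)/4 * (n₁^2 + n₂^2 + n₃^2 + n₄^2 + n₅^2) := by
    rw [← hcθ₂]
    linarith [h1, h2, e23', e34', e45', e5', p2'', p3'', p4'', p5'']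
  have hP : 0 < b₁ * b₂ * b₃ * b₄ * b₅ := by positivity
  rw [show ((1 + Real.sqrt 5) / 4) * (1 / (b₁ * b₂ * b₃ * b₄ * b₅)) *
        phi (b₁ ^ 2) (b₂ ^ 2) (b₃ ^ 2) (b₄ ^ 2) (b₅ ^ 2)
      = ((1 + Real.sqrt 5) / 4 *
        phi (b₁ ^ 2) (b₂ ^ 2) (b₃ ^ 2) (b₄ ^ 2) (b₅ ^ 2)) / (b₁ * b₂ * b₃ * b₄ * b₅)
      from by ring, le_div_iff₀ hP]
  simp only [phi, hn₁, hn₂, hn₃, hn₄, hn₅] at big ⊢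
  linarith [big]
end

section
/- Let a₁, a₂, ..., a₇ and α₁, α₂, ..., α₇ be positive real numbers with α₁ + α₂ + ... + α₇ = π. Then ∑_{i=1}^7 aᵢ cos αᵢ ≤ cos(π/7) · (1/(a₁a₂a₃a₄a₅a₆a₇)) · ψ(a₁², a₂², a₃², a₄², a₅², a₆², a₇²). -/
set_option maxHeartbeats 1000000

open Real

/-- `ψ(x₁,…,x₇) = x₁x₂x₃x₄ + x₂x₃x₄x₅ + x₃x₄x₅x₆ + x₄x₅x₆x₇ + x₅x₆x₇x₁ + x₆x₇x₁x₂ + x₇x₁x₂x₃`. -/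
def psi (x₁ x₂ x₃ x₄ x₅ x₆ x₇ : ℝ) : ℝ :=
  x₁ * x₂ * x₃ * x₄ + x₂ * x₃ * x₄ * x₅ + x₃ * x₄ * x₅ * x₆ + x₄ * x₅ * x₆ * x₇ +
    x₅ * x₆ * x₇ * x₁ + x₆ * x₇ * x₁ * x₂ + x₇ * x₁ * x₂ * x₃

/-- The cubic satisfied by `cos (π/7)`. -/
lemma cos_pi_div_seven_cubic :
    8 * Real.cos (Real.pi / 7) ^ 3 - 4 * Real.cos (Real.pi / 7) ^ 2 -
      4 * Real.cos (Real.pi / 7) + 1 = 0 := by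
  have h3 : Real.cos (3 * (Real.pi / 7)) =
      4 * Real.cos (Real.pi / 7) ^ 3 - 3 * Real.cos (Real.pi / 7) := Real.cos_three_mul _
  have h2 : Real.cos (2 * (Real.pi / 7)) = 2 * Real.cos (Real.pi / 7) ^ 2 - 1 :=
    Real.cos_two_mul _
  have h4 : Real.cos (4 * (Real.pi / 7)) =
      2 * (2 * Real.cos (Real.pi / 7) ^ 2 - 1) ^ 2 - 1 := by
    have h : (4 : ℝ) * (Real.pi / 7) = 2 * (2 * (Real.pi / 7)) := by ring
    rw [h, Real.cos_two_mul, h2]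
  have h43 : Real.cos (4 * (Real.pi / 7)) = -Real.cos (3 * (Real.pi / 7)) := by
    have h : (4 : ℝ) * (Real.pi / 7) = Real.pi - 3 * (Real.pi / 7) := by ring
    rw [h, Real.cos_pi_sub]
  have hquart : (Real.cos (Real.pi / 7) + 1) *
      (8 * Real.cos (Real.pi / 7) ^ 3 - 4 * Real.cos (Real.pi / 7) ^ 2 -
        4 * Real.cos (Real.pi / 7) + 1) = 0 := by
    rw [h4, h3] at h43; nlinarith [h43]
  have hcpos : 0 < Real.cos (Real.pi / 7) := by
    apply Real.cos_pos_of_mem_Ioo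
    constructor
    · have := Real.pi_pos; linarith
    · have := Real.pi_pos; linarith
  have hne : Real.cos (Real.pi / 7) + 1 ≠ 0 := by linarith
  rcases mul_eq_zero.mp hquart with h | h
  · exact absurd h hne
  · exact h

lemma cos_pi_div_seven_lt_one : Real.cos (Real.pi / 7) < 1 := by
  have hpi := Real.pi_pos
  have h := Real.cos_lt_cos_of_nonneg_of_le_pi (x := 0) (y := Real.pi / 7)
    le_rfl (by linarith) (by linarith)
  simpa using h

lemma cos_pi_div_seven_gt : (0.75 : ℝ) < Real.cos (Real.pi / 7) := by
  have hpi := Real.pi_pos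
  have h := Real.cos_lt_cos_of_nonneg_of_le_pi (x := Real.pi / 7) (y := Real.pi / 6)
    (by positivity) (by linarith) (by linarith)
  rw [Real.cos_pi_div_six] at h
  have hs : Real.sqrt 3 > 1.5 := by
    nlinarith [Real.sq_sqrt (by norm_num : (3:ℝ) ≥ 0), Real.sqrt_nonneg 3]
  linarith

/-- Core quadratic-form inequality: the largest eigenvalue of the 7-cycle
with one negative edge is `2 cos (π/7)`. -/
lemma quad_form_ineq (c : ℝ) (hc3 : 8 * c ^ 3 - 4 * c ^ 2 - 4 * c + 1 = 0)
    (h1 : (0.75 : ℝ) < c) (h2 : c < 1) (w₁ w₂ w₃ w₄ w₅ w₆ w₇ : ℝ) :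
    w₁ * w₂ + w₂ * w₃ + w₃ * w₄ + w₄ * w₅ + w₅ * w₆ + w₆ * w₇ - w₇ * w₁ ≤
      c * (w₁ ^ 2 + w₂ ^ 2 + w₃ ^ 2 + w₄ ^ 2 + w₅ ^ 2 + w₆ ^ 2 + w₇ ^ 2) := by
  have key : c * (w₁ ^ 2 + w₂ ^ 2 + w₃ ^ 2 + w₄ ^ 2 + w₅ ^ 2 + w₆ ^ 2 + w₇ ^ 2) -
      (w₁ * w₂ + w₂ * w₃ + w₃ * w₄ + w₄ * w₅ + w₅ * w₆ + w₆ * w₇ - w₇ * w₁) =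
      c * (w₁ + (4 * c ^ 2 - 2 * c - 2) * w₂ + (2 + 2 * c - 4 * c ^ 2) * w₇) ^ 2 +
      (2 * c ^ 2 - 1) * (w₂ + (1 - 2 * c) * w₃ + (4 * c ^ 2 - 2 * c - 1) * w₇) ^ 2 +
      (1 / 2) * (w₃ - w₄ + (4 * c ^ 2 - 2 * c - 1) * w₇) ^ 2 +
      (c - 1 / 2) * (w₄ + (2 - 4 * c ^ 2) * w₅ + (2 + 2 * c - 4 * c ^ 2) * w₇) ^ 2 +
      (1 + c - 2 * c ^ 2) * (w₅ - 2 * c * w₆ + w₇) ^ 2 := by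
    linear_combination (3/2 * w₇^2 - w₆ * w₇ + 2 * w₅ * w₇ - w₅ * w₆ + w₅^2 + w₄ * w₇
      + w₄ * w₅ - w₃ * w₇ + 1/2 * w₃^2 - 2 * w₂ * w₇ + w₂ * w₃ + w₂^2 + w₁ * w₇ - w₁ * w₂
      + c * (4 * w₇^2 + w₆^2 + 2 * w₅ * w₇ - 2 * w₃ * w₇ - w₃^2 - 4 * w₂ * w₇ + w₂^2)
      + c^2 * (-2 * w₇^2 - 4 * w₅ * w₇ - 2 * w₅^2 + 4 * w₃ * w₇ + 4 * w₂ * w₇ - 2 * w₂^2)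
      - 4 * c^3 * w₇^2) * hc3
  have t1 : 0 ≤ c * (w₁ + (4 * c ^ 2 - 2 * c - 2) * w₂ + (2 + 2 * c - 4 * c ^ 2) * w₇) ^ 2 :=
    mul_nonneg (by linarith) (sq_nonneg _)
  have t2 : 0 ≤ (2 * c ^ 2 - 1) * (w₂ + (1 - 2 * c) * w₃ + (4 * c ^ 2 - 2 * c - 1) * w₇) ^ 2 :=
    mul_nonneg (by nlinarith) (sq_nonneg _)
  have t3 : 0 ≤ (1 / 2 : ℝ) * (w₃ - w₄ + (4 * c ^ 2 - 2 * c - 1) * w₇) ^ 2 :=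
    mul_nonneg (by norm_num) (sq_nonneg _)
  have t4 : 0 ≤ (c - 1 / 2) * (w₄ + (2 - 4 * c ^ 2) * w₅ + (2 + 2 * c - 4 * c ^ 2) * w₇) ^ 2 :=
    mul_nonneg (by linarith) (sq_nonneg _)
  have t5 : 0 ≤ (1 + c - 2 * c ^ 2) * (w₅ - 2 * c * w₆ + w₇) ^ 2 :=
    mul_nonneg (by nlinarith) (sq_nonneg _)
  linarith [key, t1, t2, t3, t4, t5]

/-- Cyclic cosine inequality for seven angles summing to `π`. -/
lemma cyclic_cos_ineq (y₁ y₂ y₃ y₄ y₅ y₆ y₇ β₁ β₂ β₃ β₄ β₅ β₆ β₇ : ℝ)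
    (hsum : β₁ + β₂ + β₃ + β₄ + β₅ + β₆ + β₇ = Real.pi) :
    y₁ * y₂ * Real.cos β₁ + y₂ * y₃ * Real.cos β₂ + y₃ * y₄ * Real.cos β₃ +
      y₄ * y₅ * Real.cos β₄ + y₅ * y₆ * Real.cos β₅ + y₆ * y₇ * Real.cos β₆ +
      y₇ * y₁ * Real.cos β₇ ≤
      Real.cos (Real.pi / 7) *
        (y₁ ^ 2 + y₂ ^ 2 + y₃ ^ 2 + y₄ ^ 2 + y₅ ^ 2 + y₆ ^ 2 + y₇ ^ 2) := by
  have hc3 := cos_pi_div_seven_cubic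
  have h1 := cos_pi_div_seven_gt
  have h2 := cos_pi_div_seven_lt_one
  have e₂ : Real.cos β₂ = Real.cos (β₁ + β₂) * Real.cos β₁ +
      Real.sin (β₁ + β₂) * Real.sin β₁ := by
    rw [← Real.cos_sub, show β₁ + β₂ - β₁ = β₂ from by ring]
  have e₃ : Real.cos β₃ = Real.cos (β₁ + β₂ + β₃) * Real.cos (β₁ + β₂) +
      Real.sin (β₁ + β₂ + β₃) * Real.sin (β₁ + β₂) := by
    rw [← Real.cos_sub, show β₁ + β₂ + β₃ - (β₁ + β₂) = β₃ from by ring]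
  have e₄ : Real.cos β₄ = Real.cos (β₁ + β₂ + β₃ + β₄) * Real.cos (β₁ + β₂ + β₃) +
      Real.sin (β₁ + β₂ + β₃ + β₄) * Real.sin (β₁ + β₂ + β₃) := by
    rw [← Real.cos_sub, show β₁ + β₂ + β₃ + β₄ - (β₁ + β₂ + β₃) = β₄ from by ring]
  have e₅ : Real.cos β₅ = Real.cos (β₁ + β₂ + β₃ + β₄ + β₅) * Real.cos (β₁ + β₂ + β₃ + β₄) +
      Real.sin (β₁ + β₂ + β₃ + β₄ + β₅) * Real.sin (β₁ + β₂ + β₃ + β₄) := by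
    rw [← Real.cos_sub, show β₁ + β₂ + β₃ + β₄ + β₅ - (β₁ + β₂ + β₃ + β₄) = β₅ from by ring]
  have e₆ : Real.cos β₆ = Real.cos (β₁ + β₂ + β₃ + β₄ + β₅ + β₆) *
      Real.cos (β₁ + β₂ + β₃ + β₄ + β₅) +
      Real.sin (β₁ + β₂ + β₃ + β₄ + β₅ + β₆) * Real.sin (β₁ + β₂ + β₃ + β₄ + β₅) := by
    rw [← Real.cos_sub,
      show β₁ + β₂ + β₃ + β₄ + β₅ + β₆ - (β₁ + β₂ + β₃ + β₄ + β₅) = β₆ from by ring]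
  have e₇ : Real.cos β₇ = -Real.cos (β₁ + β₂ + β₃ + β₄ + β₅ + β₆) := by
    rw [show β₁ + β₂ + β₃ + β₄ + β₅ + β₆ = Real.pi - β₇ from by linarith,
      Real.cos_pi_sub, neg_neg]
  have keyu := quad_form_ineq _ hc3 h1 h2 y₁ (y₂ * Real.cos β₁)
    (y₃ * Real.cos (β₁ + β₂)) (y₄ * Real.cos (β₁ + β₂ + β₃))
    (y₅ * Real.cos (β₁ + β₂ + β₃ + β₄)) (y₆ * Real.cos (β₁ + β₂ + β₃ + β₄ + β₅))
    (y₇ * Real.cos (β₁ + β₂ + β₃ + β₄ + β₅ + β₆))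
  have keyv := quad_form_ineq _ hc3 h1 h2 0 (y₂ * Real.sin β₁)
    (y₃ * Real.sin (β₁ + β₂)) (y₄ * Real.sin (β₁ + β₂ + β₃))
    (y₅ * Real.sin (β₁ + β₂ + β₃ + β₄)) (y₆ * Real.sin (β₁ + β₂ + β₃ + β₄ + β₅))
    (y₇ * Real.sin (β₁ + β₂ + β₃ + β₄ + β₅ + β₆))
  have pyth₂ := Real.sin_sq_add_cos_sq β₁
  have pyth₃ := Real.sin_sq_add_cos_sq (β₁ + β₂)
  have pyth₄ := Real.sin_sq_add_cos_sq (β₁ + β₂ + β₃)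
  have pyth₅ := Real.sin_sq_add_cos_sq (β₁ + β₂ + β₃ + β₄)
  have pyth₆ := Real.sin_sq_add_cos_sq (β₁ + β₂ + β₃ + β₄ + β₅)
  have pyth₇ := Real.sin_sq_add_cos_sq (β₁ + β₂ + β₃ + β₄ + β₅ + β₆)
  have hL : y₁ * y₂ * Real.cos β₁ + y₂ * y₃ * Real.cos β₂ + y₃ * y₄ * Real.cos β₃ +
      y₄ * y₅ * Real.cos β₄ + y₅ * y₆ * Real.cos β₅ + y₆ * y₇ * Real.cos β₆ +
      y₇ * y₁ * Real.cos β₇ =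
      ((y₁) * (y₂ * Real.cos (β₁)) + (y₂ * Real.cos (β₁)) * (y₃ * Real.cos (β₁ + β₂)) + (y₃ * Real.cos (β₁ + β₂)) * (y₄ * Real.cos (β₁ + β₂ + β₃)) + (y₄ * Real.cos (β₁ + β₂ + β₃)) * (y₅ * Real.cos (β₁ + β₂ + β₃ + β₄)) + (y₅ * Real.cos (β₁ + β₂ + β₃ + β₄)) * (y₆ * Real.cos (β₁ + β₂ + β₃ + β₄ + β₅)) + (y₆ * Real.cos (β₁ + β₂ + β₃ + β₄ + β₅)) * (y₇ * Real.cos (β₁ + β₂ + β₃ + β₄ + β₅ + β₆)) - (y₇ * Real.cos (β₁ + β₂ + β₃ + β₄ + β₅ + β₆)) * (y₁)) + (((0:ℝ)) * (y₂ * Real.sin (β₁)) + (y₂ * Real.sin (β₁)) * (y₃ * Real.sin (β₁ + β₂)) + (y₃ * Real.sin (β₁ + β₂)) * (y₄ * Real.sin (β₁ + β₂ + β₃)) + (y₄ * Real.sin (β₁ + β₂ + β₃)) * (y₅ * Real.sin (β₁ + β₂ + β₃ + β₄)) + (y₅ * Real.sin (β₁ + β₂ + β₃ + β₄)) * (y₆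 * Real.sin (β₁ + β₂ + β₃ + β₄ + β₅)) + (y₆ * Real.sin (β₁ + β₂ + β₃ + β₄ + β₅)) * (y₇ * Real.sin (β₁ + β₂ + β₃ + β₄ + β₅ + β₆)) - (y₇ * Real.sin (β₁ + β₂ + β₃ + β₄ + β₅ + β₆)) * ((0:ℝ))) := by
    rw [e₂, e₃, e₄, e₅, e₆, e₇]; ring
  have hR : Real.cos (Real.pi / 7) * ((y₁) ^ 2 + (y₂ * Real.cos (β₁)) ^ 2 + (y₃ * Real.cos (β₁ + β₂)) ^ 2 + (y₄ * Real.cos (β₁ + β₂ + β₃)) ^ 2 + (y₅ * Real.cos (β₁ + β₂ + β₃ + β₄)) ^ 2 + (y₆ * Real.cos (β₁ + β₂ + β₃ + β₄ + β₅)) ^ 2 + (y₇ * Real.cos (β₁ + β₂ + β₃ + β₄ + β₅ + β₆)) ^ 2) +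
      Real.cos (Real.pi / 7) * (((0:ℝ)) ^ 2 + (y₂ * Real.sin (β₁)) ^ 2 + (y₃ * Real.sin (β₁ + β₂)) ^ 2 + (y₄ * Real.sin (β₁ + β₂ + β₃)) ^ 2 + (y₅ * Real.sin (β₁ + β₂ + β₃ + β₄)) ^ 2 + (y₆ * Real.sin (β₁ + β₂ + β₃ + β₄ + β₅)) ^ 2 + (y₇ * Real.sin (β₁ + β₂ + β₃ + β₄ + β₅ + β₆)) ^ 2) =
      Real.cos (Real.pi / 7) *
        (y₁ ^ 2 + y₂ ^ 2 + y₃ ^ 2 + y₄ ^ 2 + y₅ ^ 2 + y₆ ^ 2 + y₇ ^ 2) := by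
    linear_combination (Real.cos (Real.pi / 7) * y₂ ^ 2) * pyth₂ +
      (Real.cos (Real.pi / 7) * y₃ ^ 2) * pyth₃ + (Real.cos (Real.pi / 7) * y₄ ^ 2) * pyth₄ +
      (Real.cos (Real.pi / 7) * y₅ ^ 2) * pyth₅ + (Real.cos (Real.pi / 7) * y₆ ^ 2) * pyth₆ +
      (Real.cos (Real.pi / 7) * y₇ ^ 2) * pyth₇
  calc y₁ * y₂ * Real.cos β₁ + y₂ * y₃ * Real.cos β₂ + y₃ * y₄ * Real.cos β₃ +
      y₄ * y₅ * Real.cos β₄ + y₅ * y₆ * Real.cos β₅ + y₆ * y₇ * Real.cos β₆ +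
      y₇ * y₁ * Real.cos β₇ = ((y₁) * (y₂ * Real.cos (β₁)) + (y₂ * Real.cos (β₁)) * (y₃ * Real.cos (β₁ + β₂)) + (y₃ * Real.cos (β₁ + β₂)) * (y₄ * Real.cos (β₁ + β₂ + β₃)) + (y₄ * Real.cos (β₁ + β₂ + β₃)) * (y₅ * Real.cos (β₁ + β₂ + β₃ + β₄)) + (y₅ * Real.cos (β₁ + β₂ + β₃ + β₄)) * (y₆ * Real.cos (β₁ + β₂ + β₃ + β₄ + β₅)) + (y₆ * Real.cos (β₁ + β₂ + β₃ + β₄ + β₅)) * (y₇ * Real.cos (β₁ + β₂ + β₃ + β₄ + β₅ + β₆)) - (y₇ * Real.cos (β₁ + β₂ + β₃ + β₄ + β₅ + β₆)) * (y₁)) + (((0:ℝ)) * (y₂ * Real.sin (β₁)) + (y₂ * Real.sin (β₁)) * (y₃ * Real.sin (β₁ + β₂)) + (y₃ * Real.sin (β₁ + β₂)) * (y₄ * Real.sin (β₁ + β₂ + β₃)) + (y₄ * Real.sin (β₁ + β₂ + β₃)) * (y₅ * Real.sin (β₁ + β₂ + β₃ + β₄)) + (y₅ * Real.sin (β₁ +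 β₂ + β₃ + β₄)) * (y₆ * Real.sin (β₁ + β₂ + β₃ + β₄ + β₅)) + (y₆ * Real.sin (β₁ + β₂ + β₃ + β₄ + β₅)) * (y₇ * Real.sin (β₁ + β₂ + β₃ + β₄ + β₅ + β₆)) - (y₇ * Real.sin (β₁ + β₂ + β₃ + β₄ + β₅ + β₆)) * ((0:ℝ))) := hL
    _ ≤ Real.cos (Real.pi / 7) * ((y₁) ^ 2 + (y₂ * Real.cos (β₁)) ^ 2 + (y₃ * Real.cos (β₁ + β₂)) ^ 2 + (y₄ * Real.cos (β₁ + β₂ + β₃)) ^ 2 + (y₅ * Real.cos (β₁ + β₂ + β₃ + β₄)) ^ 2 + (y₆ * Real.cos (β₁ + β₂ + β₃ + β₄ + β₅)) ^ 2 + (y₇ * Real.cos (β₁ + β₂ + β₃ + β₄ + β₅ + β₆)) ^ 2) +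
        Real.cos (Real.pi / 7) * (((0:ℝ)) ^ 2 + (y₂ * Real.sin (β₁)) ^ 2 + (y₃ * Real.sin (β₁ + β₂)) ^ 2 + (y₄ * Real.sin (β₁ + β₂ + β₃)) ^ 2 + (y₅ * Real.sin (β₁ + β₂ + β₃ + β₄)) ^ 2 + (y₆ * Real.sin (β₁ + β₂ + β₃ + β₄ + β₅)) ^ 2 + (y₇ * Real.sin (β₁ + β₂ + β₃ + β₄ + β₅ + β₆)) ^ 2) := add_le_add keyu keyv
    _ = _ := hR


/-- **Heptagonal Inequality (normal form).** -/
theorem heptagonal_inequality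
    (a₁ a₂ a₃ a₄ a₅ a₆ a₇ α₁ α₂ α₃ α₄ α₅ α₆ α₇ : ℝ)
    (ha₁ : 0 < a₁) (ha₂ : 0 < a₂) (ha₃ : 0 < a₃) (ha₄ : 0 < a₄) (ha₅ : 0 < a₅)
    (ha₆ : 0 < a₆) (ha₇ : 0 < a₇)
    (hα₁ : 0 < α₁) (hα₂ : 0 < α₂) (hα₃ : 0 < α₃) (hα₄ : 0 < α₄) (hα₅ : 0 < α₅)
    (hα₆ : 0 < α₆) (hα₇ : 0 < α₇)
    (hsum : α₁ + α₂ + α₃ + α₄ + α₅ + α₆ + α₇ = Real.pi) :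
    a₁ * Real.cos α₁ + a₂ * Real.cos α₂ + a₃ * Real.cos α₃ + a₄ * Real.cos α₄ +
        a₅ * Real.cos α₅ + a₆ * Real.cos α₆ + a₇ * Real.cos α₇ ≤
      Real.cos (Real.pi / 7) * (1 / (a₁ * a₂ * a₃ * a₄ * a₅ * a₆ * a₇)) *
        psi (a₁ ^ 2) (a₂ ^ 2) (a₃ ^ 2) (a₄ ^ 2) (a₅ ^ 2) (a₆ ^ 2) (a₇ ^ 2) := by
  have hr1 : (0:ℝ) < a₁ * a₅ * a₆ * a₇ / (a₂ * a₃ * a₄) := by positivity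
  have hr2 : (0:ℝ) < a₂ * a₆ * a₇ * a₁ / (a₃ * a₄ * a₅) := by positivity
  have hr3 : (0:ℝ) < a₃ * a₇ * a₁ * a₂ / (a₄ * a₅ * a₆) := by positivity
  have hr4 : (0:ℝ) < a₄ * a₁ * a₂ * a₃ / (a₅ * a₆ * a₇) := by positivity
  have hr5 : (0:ℝ) < a₅ * a₂ * a₃ * a₄ / (a₆ * a₇ * a₁) := by positivity
  have hr6 : (0:ℝ) < a₆ * a₃ * a₄ * a₅ / (a₇ * a₁ * a₂) := by positivity
  have hr7 : (0:ℝ) < a₇ * a₄ * a₅ * a₆ / (a₁ * a₂ * a₃) := by positivity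
  have hx1 : (Real.sqrt (a₁ * a₅ * a₆ * a₇ / (a₂ * a₃ * a₄))) ^ 2 = a₁ * a₅ * a₆ * a₇ / (a₂ * a₃ * a₄) := Real.sq_sqrt hr1.le
  have hx2 : (Real.sqrt (a₂ * a₆ * a₇ * a₁ / (a₃ * a₄ * a₅))) ^ 2 = a₂ * a₆ * a₇ * a₁ / (a₃ * a₄ * a₅) := Real.sq_sqrt hr2.le
  have hx3 : (Real.sqrt (a₃ * a₇ * a₁ * a₂ / (a₄ * a₅ * a₆))) ^ 2 = a₃ * a₇ * a₁ * a₂ / (a₄ * a₅ * a₆) := Real.sq_sqrt hr3.le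
  have hx4 : (Real.sqrt (a₄ * a₁ * a₂ * a₃ / (a₅ * a₆ * a₇))) ^ 2 = a₄ * a₁ * a₂ * a₃ / (a₅ * a₆ * a₇) := Real.sq_sqrt hr4.le
  have hx5 : (Real.sqrt (a₅ * a₂ * a₃ * a₄ / (a₆ * a₇ * a₁))) ^ 2 = a₅ * a₂ * a₃ * a₄ / (a₆ * a₇ * a₁) := Real.sq_sqrt hr5.le
  have hx6 : (Real.sqrt (a₆ * a₃ * a₄ * a₅ / (a₇ * a₁ * a₂))) ^ 2 = a₆ * a₃ * a₄ * a₅ / (a₇ * a₁ * a₂) := Real.sq_sqrt hr6.le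
  have hx7 : (Real.sqrt (a₇ * a₄ * a₅ * a₆ / (a₁ * a₂ * a₃))) ^ 2 = a₇ * a₄ * a₅ * a₆ / (a₁ * a₂ * a₃) := Real.sq_sqrt hr7.le
  have hp14 : Real.sqrt (a₁ * a₅ * a₆ * a₇ / (a₂ * a₃ * a₄)) * Real.sqrt (a₄ * a₁ * a₂ * a₃ / (a₅ * a₆ * a₇)) = a₁ := by
    rw [← Real.sqrt_mul hr1.le,
      show (a₁ * a₅ * a₆ * a₇ / (a₂ * a₃ * a₄)) * (a₄ * a₁ * a₂ * a₃ / (a₅ * a₆ * a₇)) = a₁ ^ 2 from by field_simp]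
    exact Real.sqrt_sq ha₁.le
  have hp47 : Real.sqrt (a₄ * a₁ * a₂ * a₃ / (a₅ * a₆ * a₇)) * Real.sqrt (a₇ * a₄ * a₅ * a₆ / (a₁ * a₂ * a₃)) = a₄ := by
    rw [← Real.sqrt_mul hr4.le,
      show (a₄ * a₁ * a₂ * a₃ / (a₅ * a₆ * a₇)) * (a₇ * a₄ * a₅ * a₆ / (a₁ * a₂ * a₃)) = a₄ ^ 2 from by field_simp]
    exact Real.sqrt_sq ha₄.le
  have hp73 : Real.sqrt (a₇ * a₄ * a₅ * a₆ / (a₁ * a₂ * a₃)) * Real.sqrt (a₃ * a₇ * a₁ * a₂ / (a₄ * a₅ * a₆)) = a₇ := by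
    rw [← Real.sqrt_mul hr7.le,
      show (a₇ * a₄ * a₅ * a₆ / (a₁ * a₂ * a₃)) * (a₃ * a₇ * a₁ * a₂ / (a₄ * a₅ * a₆)) = a₇ ^ 2 from by field_simp]
    exact Real.sqrt_sq ha₇.le
  have hp36 : Real.sqrt (a₃ * a₇ * a₁ * a₂ / (a₄ * a₅ * a₆)) * Real.sqrt (a₆ * a₃ * a₄ * a₅ / (a₇ * a₁ * a₂)) = a₃ := by
    rw [← Real.sqrt_mul hr3.le,
      show (a₃ * a₇ * a₁ * a₂ / (a₄ * a₅ * a₆)) * (a₆ * a₃ * a₄ * a₅ / (a₇ * a₁ * a₂)) = a₃ ^ 2 from by field_simp]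
    exact Real.sqrt_sq ha₃.le
  have hp62 : Real.sqrt (a₆ * a₃ * a₄ * a₅ / (a₇ * a₁ * a₂)) * Real.sqrt (a₂ * a₆ * a₇ * a₁ / (a₃ * a₄ * a₅)) = a₆ := by
    rw [← Real.sqrt_mul hr6.le,
      show (a₆ * a₃ * a₄ * a₅ / (a₇ * a₁ * a₂)) * (a₂ * a₆ * a₇ * a₁ / (a₃ * a₄ * a₅)) = a₆ ^ 2 from by field_simp]
    exact Real.sqrt_sq ha₆.le
  have hp25 : Real.sqrt (a₂ * a₆ * a₇ * a₁ / (a₃ * a₄ * a₅)) * Real.sqrt (a₅ * a₂ * a₃ * a₄ / (a₆ * a₇ * a₁)) = a₂ := by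
    rw [← Real.sqrt_mul hr2.le,
      show (a₂ * a₆ * a₇ * a₁ / (a₃ * a₄ * a₅)) * (a₅ * a₂ * a₃ * a₄ / (a₆ * a₇ * a₁)) = a₂ ^ 2 from by field_simp]
    exact Real.sqrt_sq ha₂.le
  have hp51 : Real.sqrt (a₅ * a₂ * a₃ * a₄ / (a₆ * a₇ * a₁)) * Real.sqrt (a₁ * a₅ * a₆ * a₇ / (a₂ * a₃ * a₄)) = a₅ := by
    rw [← Real.sqrt_mul hr5.le,
      show (a₅ * a₂ * a₃ * a₄ / (a₆ * a₇ * a₁)) * (a₁ * a₅ * a₆ * a₇ / (a₂ * a₃ * a₄)) = a₅ ^ 2 from by field_simp]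
    exact Real.sqrt_sq ha₅.le
  have key := cyclic_cos_ineq (Real.sqrt (a₁ * a₅ * a₆ * a₇ / (a₂ * a₃ * a₄))) (Real.sqrt (a₄ * a₁ * a₂ * a₃ / (a₅ * a₆ * a₇))) (Real.sqrt (a₇ * a₄ * a₅ * a₆ / (a₁ * a₂ * a₃))) (Real.sqrt (a₃ * a₇ * a₁ * a₂ / (a₄ * a₅ * a₆))) (Real.sqrt (a₆ * a₃ * a₄ * a₅ / (a₇ * a₁ * a₂))) (Real.sqrt (a₂ * a₆ * a₇ * a₁ / (a₃ * a₄ * a₅))) (Real.sqrt (a₅ * a₂ * a₃ * a₄ / (a₆ * a₇ * a₁))) α₁ α₄ α₇ α₃ α₆ α₂ α₅ (by linarith)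
  rw [hp14, hp47, hp73, hp36, hp62, hp25, hp51, hx1, hx4, hx7, hx3, hx6, hx2, hx5] at key
  have hfin : Real.cos (Real.pi / 7) * ((a₁ * a₅ * a₆ * a₇ / (a₂ * a₃ * a₄)) + (a₄ * a₁ * a₂ * a₃ / (a₅ * a₆ * a₇)) + (a₇ * a₄ * a₅ * a₆ / (a₁ * a₂ * a₃)) + (a₃ * a₇ * a₁ * a₂ / (a₄ * a₅ * a₆)) + (a₆ * a₃ * a₄ * a₅ / (a₇ * a₁ * a₂)) + (a₂ * a₆ * a₇ * a₁ / (a₃ * a₄ * a₅)) + (a₅ * a₂ * a₃ * a₄ / (a₆ * a₇ * a₁))) =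
      Real.cos (Real.pi / 7) * (1 / (a₁ * a₂ * a₃ * a₄ * a₅ * a₆ * a₇)) *
        psi (a₁ ^ 2) (a₂ ^ 2) (a₃ ^ 2) (a₄ ^ 2) (a₅ ^ 2) (a₆ ^ 2) (a₇ ^ 2) := by
    rw [psi]; field_simp; ring
  linarith [key]
end

section
/- Let x₁, x₂, x₃, x₄, x₅ and α₁, α₂, α₃, α₄, α₅ be positive real numbers with α₁ + α₂ + α₃ + α₄ + α₅ = π. Then, with x₆ = x₁, one has ∑_{i=1}^5 xᵢ xᵢ₊₁ cos αᵢ ≤ cos(π/5) · ∑_{i=1}^5 xᵢ². (This is Tóth's inequality for n = 5, which the paper derives from the normal form of the Pentagonal Inequality, showing that the Pentagonal Inequality is sharp.) -/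
open Real

/-- Scalar quadratic lemma: the twisted 5-cycle form is bounded by `(1+√5)/4` times
the sum of squares. -/
lemma twisted_cycle_bound (u₁ u₂ u₃ u₄ u₅ : ℝ) :
    u₁*u₂ + u₂*u₃ + u₃*u₄ + u₄*u₅ - u₅*u₁ ≤
      (1 + Real.sqrt 5)/4 * (u₁^2 + u₂^2 + u₃^2 + u₄^2 + u₅^2) := by
  have hs : Real.sqrt 5 ^ 2 = 5 := Real.sq_sqrt (by norm_num)
  have hs2 : Real.sqrt 5 ≥ 2 := by
    nlinarith [Real.sqrt_nonneg 5]
  set s := Real.sqrt 5 with hsdef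
  have key : (1 + s)/4 * (u₁^2 + u₂^2 + u₃^2 + u₄^2 + u₅^2) -
      (u₁*u₂ + u₂*u₃ + u₃*u₄ + u₄*u₅ - u₅*u₁) =
      (1 + s)/4 * (u₁ + (1-s)/2*u₂ + (s-1)/2*u₅)^2
      + 1/2 * (u₂ - u₃ + (s-1)/2*u₅)^2
      + (s-1)/4 * (u₃ - (1+s)/2*u₄ + u₅)^2 := by
    linear_combination (-1/16*u₅^2 + 1/4*u₄*u₅ - 1/16*u₄^2 + 1/4*u₃*u₄ - 1/8*u₂*u₅
      + 1/16*u₂^2 - 1/4*u₁*u₅ + 1/4*u₁*u₂ - 1/16*s*u₅^2 - 1/16*s*u₄^2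
      + 1/8*s*u₂*u₅ - 1/16*s*u₂^2) * hs
  nlinarith [key, sq_nonneg (u₁ + (1-s)/2*u₂ + (s-1)/2*u₅),
    sq_nonneg (u₂ - u₃ + (s-1)/2*u₅), sq_nonneg (u₃ - (1+s)/2*u₄ + u₅),
    mul_nonneg (by linarith : (0:ℝ) ≤ (1+s)/4) (sq_nonneg (u₁ + (1-s)/2*u₂ + (s-1)/2*u₅)),
    mul_nonneg (by linarith : (0:ℝ) ≤ (s-1)/4) (sq_nonneg (u₃ - (1+s)/2*u₄ + u₅))]

/-- **Tóth's inequality for `n = 5`** (with cyclic indices, `x₆ = x₁`). -/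
theorem toth_inequality_five
    (x₁ x₂ x₃ x₄ x₅ α₁ α₂ α₃ α₄ α₅ : ℝ)
    (hx₁ : 0 < x₁) (hx₂ : 0 < x₂) (hx₃ : 0 < x₃) (hx₄ : 0 < x₄) (hx₅ : 0 < x₅)
    (hα₁ : 0 < α₁) (hα₂ : 0 < α₂) (hα₃ : 0 < α₃) (hα₄ : 0 < α₄) (hα₅ : 0 < α₅)
    (hsum : α₁ + α₂ + α₃ + α₄ + α₅ = Real.pi) :
    x₁ * x₂ * Real.cos α₁ + x₂ * x₃ * Real.cos α₂ + x₃ * x₄ * Real.cos α₃ +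
        x₄ * x₅ * Real.cos α₄ + x₅ * x₁ * Real.cos α₅ ≤
      Real.cos (Real.pi / 5) * (x₁ ^ 2 + x₂ ^ 2 + x₃ ^ 2 + x₄ ^ 2 + x₅ ^ 2) := by
  -- partial sums of the angles
  set σ₁ := α₁ with hσ₁
  set σ₂ := α₁ + α₂ with hσ₂
  set σ₃ := α₁ + α₂ + α₃ with hσ₃
  set σ₄ := α₁ + α₂ + α₃ + α₄ with hσ₄
  -- express each cos αᵢ through the partial sums
  have h₂ : Real.cos α₂ = Real.cos σ₂ * Real.cos σ₁ + Real.sin σ₂ * Real.sin σ₁ := by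
    rw [← Real.cos_sub, hσ₂, hσ₁]; ring_nf
  have h₃ : Real.cos α₃ = Real.cos σ₃ * Real.cos σ₂ + Real.sin σ₃ * Real.sin σ₂ := by
    rw [← Real.cos_sub, hσ₃, hσ₂]; ring_nf
  have h₄ : Real.cos α₄ = Real.cos σ₄ * Real.cos σ₃ + Real.sin σ₄ * Real.sin σ₃ := by
    rw [← Real.cos_sub, hσ₄, hσ₃]; ring_nf
  have h₅ : Real.cos α₅ = -Real.cos σ₄ := by
    have : α₅ = Real.pi - σ₄ := by rw [hσ₄]; linarith
    rw [this, Real.cos_pi_sub]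
  -- planar coordinates
  set p₁ := x₁ with hp₁
  set q₁ := (0:ℝ) with hq₁
  set p₂ := x₂ * Real.cos σ₁ with hp₂
  set q₂ := x₂ * Real.sin σ₁ with hq₂
  set p₃ := x₃ * Real.cos σ₂ with hp₃
  set q₃ := x₃ * Real.sin σ₂ with hq₃
  set p₄ := x₄ * Real.cos σ₃ with hp₄
  set q₄ := x₄ * Real.sin σ₃ with hq₄
  set p₅ := x₅ * Real.cos σ₄ with hp₅
  set q₅ := x₅ * Real.sin σ₄ with hq₅
  have e₁ : Real.sin σ₁ ^ 2 + Real.cos σ₁ ^ 2 = 1 := Real.sin_sq_add_cos_sq σ₁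
  have e₂ : Real.sin σ₂ ^ 2 + Real.cos σ₂ ^ 2 = 1 := Real.sin_sq_add_cos_sq σ₂
  have e₃ : Real.sin σ₃ ^ 2 + Real.cos σ₃ ^ 2 = 1 := Real.sin_sq_add_cos_sq σ₃
  have e₄ : Real.sin σ₄ ^ 2 + Real.cos σ₄ ^ 2 = 1 := Real.sin_sq_add_cos_sq σ₄
  have key₁ := twisted_cycle_bound p₁ p₂ p₃ p₄ p₅
  have key₂ := twisted_cycle_bound q₁ q₂ q₃ q₄ q₅
  have hcos5 : Real.cos (Real.pi / 5) = (1 + Real.sqrt 5) / 4 := Real.cos_pi_div_five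
  rw [hcos5]
  have hx₁sq : p₁^2 + q₁^2 = x₁^2 := by rw [hp₁, hq₁]; ring
  have hx₂sq : p₂^2 + q₂^2 = x₂^2 := by linear_combination x₂^2 * e₁
  have hx₃sq : p₃^2 + q₃^2 = x₃^2 := by linear_combination x₃^2 * e₂
  have hx₄sq : p₄^2 + q₄^2 = x₄^2 := by linear_combination x₄^2 * e₃
  have hx₅sq : p₅^2 + q₅^2 = x₅^2 := by linear_combination x₅^2 * e₄
  have hterm₁ : x₁ * x₂ * Real.cos α₁ = p₁*p₂ + q₁*q₂ := by
    rw [hp₁, hq₁, hp₂, hq₂, hσ₁]; ring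
  have hterm₂ : x₂ * x₃ * Real.cos α₂ = p₂*p₃ + q₂*q₃ := by
    rw [hp₂, hq₂, hp₃, hq₃, h₂]; ring
  have hterm₃ : x₃ * x₄ * Real.cos α₃ = p₃*p₄ + q₃*q₄ := by
    rw [hp₃, hq₃, hp₄, hq₄, h₃]; ring
  have hterm₄ : x₄ * x₅ * Real.cos α₄ = p₄*p₅ + q₄*q₅ := by
    rw [hp₄, hq₄, hp₅, hq₅, h₄]; ring
  have hterm₅ : x₅ * x₁ * Real.cos α₅ = -(p₅*p₁ + q₅*q₁) := by
    rw [hp₅, hq₅, hp₁, hq₁, h₅]; ring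
  rw [hterm₁, hterm₂, hterm₃, hterm₄, hterm₅, ← hx₁sq, ← hx₂sq, ← hx₃sq, ← hx₄sq, ← hx₅sq]
  linarith [key₁, key₂]
end

section
/- Let a₁ ≤ a₂ ≤ a₃ ≤ a₄ ≤ a₅ be positive real numbers with a₂ < a₄. Then φ(a₁², a₅², a₂², a₃², a₄²) < φ(a₁², a₂², a₃², a₄², a₅²). -/
/-- If `0 < a₁ ≤ a₂ ≤ a₃ ≤ a₄ ≤ a₅` and `a₂ < a₄`, then
`φ(a₁², a₅², a₂², a₃², a₄²) < φ(a₁², a₂², a₃², a₄², a₅²)`. -/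
theorem phi_strict_lt (a₁ a₂ a₃ a₄ a₅ : ℝ)
    (ha₁ : 0 < a₁) (ha₂ : 0 < a₂) (ha₃ : 0 < a₃) (ha₄ : 0 < a₄) (ha₅ : 0 < a₅)
    (h12 : a₁ ≤ a₂) (h23 : a₂ ≤ a₃) (h34 : a₃ ≤ a₄) (h45 : a₄ ≤ a₅)
    (h24 : a₂ < a₄) :
    phi (a₁ ^ 2) (a₅ ^ 2) (a₂ ^ 2) (a₃ ^ 2) (a₄ ^ 2) <
      phi (a₁ ^ 2) (a₂ ^ 2) (a₃ ^ 2) (a₄ ^ 2) (a₅ ^ 2) := by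
  have h15 : a₁ < a₅ := lt_of_le_of_lt h12 (lt_of_lt_of_le h24 h45)
  have hb4 : a₂ ^ 2 < a₄ ^ 2 := by nlinarith
  have hb5 : a₁ ^ 2 < a₅ ^ 2 := by nlinarith
  have hb3 : 0 < a₃ ^ 2 := by positivity
  unfold phi
  nlinarith [mul_pos (mul_pos hb3 (sub_pos.2 hb4)) (sub_pos.2 hb5)]
end
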